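/- arXiv:2106.06565 — 10 statements merged into one kernel-verified Lean document; each statement's English description precedes it below -/
import Mathlib

section
/- Let C be a neural code on n neurons that has a realization by nonempty bounded open intervals I_1,…,I_n ⊆ ℝ, where I_i = (a_i, b_i) with a_i < b_i. Then C also has a realization by nonempty bounded open intervals I'_1,…,I'_n, I'_i = (a'_i, b'_i) with a'_i < b'_i, such that b'_i ≠ a'_j for all i, j ∈ [n] (i.e., the epsilon distance min_{1≤i,j≤n} |b'_i − a'_j| of the realization is strictly positive). -/
/-- The atom of a codeword `σ` with respect to sets `U_1, …, U_n`. -/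
def atomOf {n : ℕ} {X : Type*} (U : Fin n → Set X) (σ : Finset (Fin n)) : Set X :=
  (⋂ i ∈ σ, U i) \ (⋃ j ∈ (σᶜ : Finset (Fin n)), U j)

/-- `U` is a realization of the neural code `C`. -/
def Realizes {n : ℕ} {X : Type*} (U : Fin n → Set X) (C : Set (Finset (Fin n))) : Prop :=
  C = {σ : Finset (Fin n) | (atomOf U σ).Nonempty}

lemma mem_atom_Ioo_iff {n : ℕ} (a b : Fin n → ℝ) (σ : Finset (Fin n)) (x : ℝ) :
    x ∈ atomOf (fun i => Set.Ioo (a i) (b i)) σ ↔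
      (∀ i ∈ σ, a i < x ∧ x < b i) ∧ ∀ j, j ∉ σ → ¬(a j < x ∧ x < b j) := by
  simp only [atomOf, Set.mem_diff, Set.mem_iInter, Set.mem_iUnion, Set.mem_Ioo,
    Finset.mem_compl, not_exists, not_and]

/-- A code realized by nonempty bounded open intervals has another such realization
whose epsilon distance is strictly positive. -/
theorem open_realization_with_positive_epsilon {n : ℕ} (C : Set (Finset (Fin n)))
    (a b : Fin n → ℝ) (hab : ∀ i, a i < b i)
    (hreal : Realizes (fun i => Set.Ioo (a i) (b i)) C) :
    ∃ a' b' : Fin n → ℝ, (∀ i, a' i < b' i) ∧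
      Realizes (fun i => Set.Ioo (a' i) (b' i)) C ∧
      (∀ i j : Fin n, b' i ≠ a' j) := by
  rcases Nat.eq_zero_or_pos n with hn | hn
  · subst hn
    exact ⟨a, b, hab, hreal, fun i _ => i.elim0⟩
  set s : Finset ℝ := Finset.univ.image a ∪ Finset.univ.image b with hs
  have has : ∀ i, a i ∈ s := fun i =>
    Finset.mem_union_left _ (Finset.mem_image_of_mem a (Finset.mem_univ i))
  have hbs : ∀ i, b i ∈ s := fun i =>
    Finset.mem_union_right _ (Finset.mem_image_of_mem b (Finset.mem_univ i))
  set gs : Finset ℝ := ((s ×ˢ s).filter fun p => p.1 < p.2).image fun p => p.2 - p.1 with hgs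
  have i00 : Fin n := ⟨0, hn⟩
  have hne : gs.Nonempty :=
    ⟨b i00 - a i00, Finset.mem_image.mpr ⟨(a i00, b i00),
      Finset.mem_filter.mpr ⟨Finset.mem_product.mpr ⟨has i00, hbs i00⟩, hab i00⟩, rfl⟩⟩
  set m := gs.min' hne with hm
  have key : ∀ p ∈ s, ∀ q ∈ s, p < q → m ≤ q - p := fun p hp q hq hpq =>
    Finset.min'_le gs _ (Finset.mem_image.mpr ⟨(p, q),
      Finset.mem_filter.mpr ⟨Finset.mem_product.mpr ⟨hp, hq⟩, hpq⟩, rfl⟩)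
  have hmpos : 0 < m := by
    obtain ⟨p, hp, hpe⟩ := Finset.mem_image.mp (gs.min'_mem hne)
    have := (Finset.mem_filter.mp hp).2
    rw [hm, ← hpe]; linarith
  set ε := m / 4 with hε
  have hεpos : 0 < ε := by positivity
  refine ⟨fun j => a j + ε, b, ?_, ?_, ?_⟩
  · intro i
    have := key _ (has i) _ (hbs i) (hab i)
    simp only
    linarith
  · unfold Realizes at hreal ⊢
    rw [hreal]
    ext σ
    simp only [Set.mem_setOf_eq]
    constructor
    · rintro ⟨x, hx⟩
      rw [mem_atom_Ioo_iff] at hx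
      obtain ⟨h1, h2⟩ := hx
      by_cases hc : ∃ i ∈ σ, x ≤ a i + ε
      · obtain ⟨i0, hi0, hxi0⟩ := hc
        refine ⟨x + ε, (mem_atom_Ioo_iff _ _ _ _).mpr ⟨?_, ?_⟩⟩
        · intro i hi
          have h1i := h1 i hi
          refine ⟨by linarith [h1i.1], ?_⟩
          have hax : a i0 < x := (h1 i0 hi0).1
          have hk := key _ (has i0) _ (hbs i) (lt_trans hax h1i.2)
          linarith
        · rintro j hj ⟨hl, hr⟩
          rcases not_and_or.mp (h2 j hj) with h | h
          · rw [not_lt] at h; linarith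
          · rw [not_lt] at h; linarith
      · push_neg at hc
        refine ⟨x, (mem_atom_Ioo_iff _ _ _ _).mpr ⟨?_, ?_⟩⟩
        · exact fun i hi => ⟨hc i hi, (h1 i hi).2⟩
        · rintro j hj ⟨hl, hr⟩
          rcases not_and_or.mp (h2 j hj) with h | h
          · rw [not_lt] at h; linarith
          · rw [not_lt] at h; linarith
    · rintro ⟨x, hx⟩
      rw [mem_atom_Ioo_iff] at hx
      obtain ⟨h1, h2⟩ := hx
      by_cases hc : ∃ j, j ∉ σ ∧ a j < x ∧ x ≤ a j + ε
      · obtain ⟨j0, hj0, hj0l, hj0r⟩ := hc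
        refine ⟨a j0, (mem_atom_Ioo_iff _ _ _ _).mpr ⟨?_, ?_⟩⟩
        · intro i hi
          have h1i := h1 i hi
          exact ⟨by linarith [h1i.1], lt_trans hj0l h1i.2⟩
        · rintro j hj ⟨hl, hr⟩
          rcases not_and_or.mp (h2 j hj) with h | h
          · rw [not_lt] at h
            have hk := key _ (has j) _ (has j0) hl
            linarith
          · rw [not_lt] at h
            have hk := key _ (has j0) _ (hbs j) hr
            linarith
      · push_neg at hc
        refine ⟨x, (mem_atom_Ioo_iff _ _ _ _).mpr ⟨?_, ?_⟩⟩
        · intro i hi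
          have h1i := h1 i hi
          exact ⟨by linarith [h1i.1], h1i.2⟩
        · rintro j hj ⟨hl, hr⟩
          rcases not_and_or.mp (h2 j hj) with h | h
          · rw [not_lt] at h
            have := hc j hj hl
            linarith
          · rw [not_lt] at h; linarith
  · intro i j h
    simp only at h
    have hlt : a j < b i := by rw [h]; linarith
    have := key _ (has j) _ (hbs i) hlt
    rw [h] at this
    linarith
end

section
/- Let C be a neural code on n neurons that has a realization by nonempty compact intervals I_1,…,I_n ⊆ ℝ, where I_i = [a_i, b_i] with a_i ≤ b_i (so some I_i may be singletons). Then C also has a realization by nondegenerate compact intervals I'_1,…,I'_n, I'_i = [a'_i, b'_i] with a'_i < b'_i for every i ∈ [n]. -/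
lemma mem_atomOf_iff {n : ℕ} {X : Type*} (U : Fin n → Set X) (σ : Finset (Fin n)) (x : X) :
    x ∈ atomOf U σ ↔ ∀ i, i ∈ σ ↔ x ∈ U i := by
  simp only [atomOf, Set.mem_diff, Set.mem_iInter, Set.mem_iUnion, Finset.mem_compl,
    not_exists]
  constructor
  · rintro ⟨h1, h2⟩ i
    exact ⟨h1 i, fun hx => by_contra fun hi => h2 i hi hx⟩
  · intro h
    exact ⟨fun i hi => (h i).1 hi, fun i hi hx => hi ((h i).2 hx)⟩

/-- A code realized by nonempty compact intervals (possibly singletons) has a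
realization by nondegenerate compact intervals. -/
theorem closed_realization_without_singletons {n : ℕ} (C : Set (Finset (Fin n)))
    (a b : Fin n → ℝ) (hab : ∀ i, a i ≤ b i)
    (hreal : Realizes (fun i => Set.Icc (a i) (b i)) C) :
    ∃ a' b' : Fin n → ℝ, (∀ i, a' i < b' i) ∧
      Realizes (fun i => Set.Icc (a' i) (b' i)) C := by
  classical
  set E : Finset ℝ := Finset.univ.image a ∪ Finset.univ.image b with hEdef
  have haE : ∀ i, a i ∈ E := fun i =>
    Finset.mem_union_left _ (Finset.mem_image_of_mem a (Finset.mem_univ i))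
  have hbE : ∀ i, b i ∈ E := fun i =>
    Finset.mem_union_right _ (Finset.mem_image_of_mem b (Finset.mem_univ i))
  have hC : ∀ σ ∈ C, (atomOf (fun i => Set.Icc (a i) (b i)) σ).Nonempty := by
    intro σ hσ; rw [hreal] at hσ; exact hσ
  set w : Finset (Fin n) → ℝ := fun σ =>
    if h : (atomOf (fun i => Set.Icc (a i) (b i)) σ).Nonempty then h.choose else 0 with hwdef
  have hw : ∀ σ ∈ C, ∀ i, i ∈ σ ↔ (a i ≤ w σ ∧ w σ ≤ b i) := by
    intro σ hσ i
    have h := hC σ hσ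
    have hmem : w σ ∈ atomOf (fun i => Set.Icc (a i) (b i)) σ := by
      simp only [hwdef, dif_pos h]; exact h.choose_spec
    have := (mem_atomOf_iff _ _ _).1 hmem i
    simpa [Set.mem_Icc] using this
  -- build δ
  set G1 : Finset ℝ := ((E ×ˢ E).filter (fun p => p.1 ≠ p.2)).image (fun p => |p.1 - p.2|)
    with hG1def
  set G2 : Finset ℝ := ((Finset.univ ×ˢ E).filter
      (fun p : Finset (Fin n) × ℝ => p.1 ∈ C ∧ w p.1 ≠ p.2)).image
      (fun p => 3 * |w p.1 - p.2|) with hG2def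
  set G : Finset ℝ := insert 1 (G1 ∪ G2) with hGdef
  have hGne : G.Nonempty := ⟨1, Finset.mem_insert_self _ _⟩
  have hGpos : ∀ g ∈ G, 0 < g := by
    intro g hg
    rw [hGdef, Finset.mem_insert] at hg
    rcases hg with rfl | hg
    · norm_num
    rw [Finset.mem_union] at hg
    rcases hg with hg | hg
    · rw [hG1def, Finset.mem_image] at hg
      obtain ⟨p, hp, rfl⟩ := hg
      rw [Finset.mem_filter] at hp
      exact abs_pos.2 (sub_ne_zero.2 hp.2)
    · rw [hG2def, Finset.mem_image] at hg
      obtain ⟨p, hp, rfl⟩ := hg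
      rw [Finset.mem_filter] at hp
      have : 0 < |w p.1 - p.2| := abs_pos.2 (sub_ne_zero.2 hp.2.2)
      linarith
  set m : ℝ := G.min' hGne with hmdef
  have hmpos : 0 < m := hGpos _ (G.min'_mem hGne)
  set δ : ℝ := m / 2 with hδdef
  have hδpos : 0 < δ := by positivity
  have hδlt : ∀ g ∈ G1 ∪ G2, δ < g := by
    intro g hg
    have : m ≤ g := G.min'_le g (Finset.mem_insert_of_mem hg)
    rw [hδdef]; linarith
  have hδE : ∀ e ∈ E, ∀ f ∈ E, e ≠ f → δ < |e - f| := by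
    intro e he f hf hef
    apply hδlt
    apply Finset.mem_union_left
    rw [hG1def, Finset.mem_image]
    exact ⟨(e, f), Finset.mem_filter.2 ⟨Finset.mem_product.2 ⟨he, hf⟩, hef⟩, rfl⟩
  have hδW : ∀ σ ∈ C, ∀ e ∈ E, w σ ≠ e → δ < 3 * |w σ - e| := by
    intro σ hσ e he hne
    apply hδlt
    apply Finset.mem_union_right
    rw [hG2def, Finset.mem_image]
    exact ⟨(σ, e), Finset.mem_filter.2 ⟨Finset.mem_product.2 ⟨Finset.mem_univ _, he⟩,
      hσ, hne⟩, rfl⟩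
  refine ⟨fun i => 3 * a i - δ, fun i => 3 * b i + δ, fun i => by have := hab i; dsimp only; linarith, ?_⟩
  unfold Realizes
  ext σ
  simp only [Set.mem_setOf_eq]
  constructor
  · -- σ ∈ C → new atom nonempty
    intro hσ
    refine ⟨3 * w σ, (mem_atomOf_iff _ _ _).2 fun i => ?_⟩
    rw [hw σ hσ i, Set.mem_Icc]
    constructor
    · rintro ⟨h1, h2⟩
      constructor <;> linarith
    · rintro ⟨h1, h2⟩
      constructor
      · by_cases h : a i = w σ
        · linarith
        · have := hδW σ hσ (a i) (haE i) (Ne.symm h)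
          rcases abs_cases (w σ - a i) with ⟨he, _⟩ | ⟨he, _⟩ <;> rw [he] at this <;> linarith
      · by_cases h : b i = w σ
        · linarith
        · have := hδW σ hσ (b i) (hbE i) (Ne.symm h)
          rcases abs_cases (w σ - b i) with ⟨he, _⟩ | ⟨he, _⟩ <;> rw [he] at this <;> linarith
  · -- new atom nonempty → σ ∈ C
    rintro ⟨y, hy⟩
    have hy' := (mem_atomOf_iff _ _ _).1 hy
    rw [hreal]
    by_cases hcase : ∃ e ∈ E, |y - 3 * e| ≤ δ
    · obtain ⟨e, heE, he⟩ := hcase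
      rw [abs_le] at he
      refine ⟨e, (mem_atomOf_iff _ _ _).2 fun i => ?_⟩
      rw [hy' i, Set.mem_Icc, Set.mem_Icc]
      constructor
      · rintro ⟨h1, h2⟩
        constructor
        · by_cases h : a i = e
          · linarith
          · have := hδE (a i) (haE i) e heE h
            rcases abs_cases (a i - e) with ⟨hq, _⟩ | ⟨hq, _⟩ <;> rw [hq] at this <;> linarith
        · by_cases h : b i = e
          · linarith
          · have := hδE (b i) (hbE i) e heE h
            rcases abs_cases (b i - e) with ⟨hq, _⟩ | ⟨hq, _⟩ <;> rw [hq] at this <;> linarith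
      · rintro ⟨h1, h2⟩
        constructor <;> linarith
    · push_neg at hcase
      refine ⟨y / 3, (mem_atomOf_iff _ _ _).2 fun i => ?_⟩
      rw [hy' i, Set.mem_Icc, Set.mem_Icc]
      constructor
      · rintro ⟨h1, h2⟩
        constructor
        · have := hcase (a i) (haE i)
          rcases abs_cases (y - 3 * a i) with ⟨hq, _⟩ | ⟨hq, _⟩ <;> rw [hq] at this <;> linarith
        · have := hcase (b i) (hbE i)
          rcases abs_cases (y - 3 * b i) with ⟨hq, _⟩ | ⟨hq, _⟩ <;> rw [hq] at this <;> linarith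
      · rintro ⟨h1, h2⟩
        constructor <;> linarith
end

section
/- Let C be a neural code on n neurons that has a realization by nonempty compact intervals I_1,…,I_n ⊆ ℝ (possibly singletons). Then C also has a realization by nondegenerate compact intervals I'_1,…,I'_n, I'_i = [a'_i, b'_i] with a'_i < b'_i, such that b'_i ≠ a'_j for all i, j ∈ [n] (i.e., the epsilon distance min_{1≤i,j≤n} |b'_i − a'_j| of the realization is strictly positive). -/
namespace CRWPE



noncomputable def cnt (E : Finset ℝ) (x : ℝ) : ℕ := (E.filter (fun e => e ≤ x)).card

noncomputable def fm (E : Finset ℝ) (ε x : ℝ) : ℝ := x + 3*ε*(cnt E x)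

lemma cnt_mono (E : Finset ℝ) {x y : ℝ} (h : x ≤ y) : cnt E x ≤ cnt E y := by
  apply Finset.card_le_card
  intro e he
  simp only [Finset.mem_filter] at he ⊢
  exact ⟨he.1, he.2.trans h⟩

lemma fm_mono (E : Finset ℝ) {ε : ℝ} (hε : 0 ≤ ε) {x y : ℝ} (h : x ≤ y) :
    fm E ε x ≤ fm E ε y := by
  have := cnt_mono E h
  have : (cnt E x : ℝ) ≤ cnt E y := by exact_mod_cast this
  unfold fm; nlinarith

lemma cnt_lt (E : Finset ℝ) {x e : ℝ} (he : e ∈ E) (h : x < e) : cnt E x < cnt E e := by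
  apply Finset.card_lt_card
  rw [Finset.ssubset_iff_of_subset]
  · exact ⟨e, by simp [he], by simp [not_le.mpr h]⟩
  · intro u hu
    simp only [Finset.mem_filter] at hu ⊢
    exact ⟨hu.1, hu.2.trans (le_of_lt h)⟩

lemma fm_sep (E : Finset ℝ) {ε : ℝ} (hε : 0 ≤ ε) {x e : ℝ} (he : e ∈ E) (h : x < e) :
    fm E ε x + 3*ε ≤ fm E ε e := by
  have h1 : cnt E x + 1 ≤ cnt E e := cnt_lt E he h
  have h2 : (cnt E x : ℝ) + 1 ≤ cnt E e := by exact_mod_cast h1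
  unfold fm; nlinarith
/-- a point strictly above `t` but below every element of `E` above `t` -/
noncomputable def above (E : Finset ℝ) (t : ℝ) : ℝ :=
  if h : (E.filter (fun e => t < e)).Nonempty then (t + (E.filter (fun e => t < e)).min' h)/2
  else t + 1

lemma above_gt (E : Finset ℝ) (t : ℝ) : t < above E t := by
  unfold above
  split_ifs with h
  · have := (E.filter (fun e => t < e)).min'_mem h
    rw [Finset.mem_filter] at this
    linarith [this.2]
  · linarith

lemma above_lt (E : Finset ℝ) {t v : ℝ} (hv : v ∈ E) (h : t < v) : above E t < v := by
  unfold above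
  have hvmem : v ∈ E.filter (fun e => t < e) := Finset.mem_filter.mpr ⟨hv, h⟩
  have hne : (E.filter (fun e => t < e)).Nonempty := ⟨v, hvmem⟩
  rw [dif_pos hne]
  have hmin := Finset.min'_le _ v hvmem
  have hminmem := (E.filter (fun e => t < e)).min'_mem hne
  rw [Finset.mem_filter] at hminmem
  have := hminmem.2
  linarith

noncomputable def psi (E : Finset ℝ) (ε y : ℝ) : ℝ :=
  if h : (E.filter (fun e => fm E ε e - ε ≤ y)).Nonempty then
    (if y ≤ fm E ε ((E.filter (fun e => fm E ε e - ε ≤ y)).max' h) + ε then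
      (E.filter (fun e => fm E ε e - ε ≤ y)).max' h
    else above E ((E.filter (fun e => fm E ε e - ε ≤ y)).max' h))
  else if h2 : E.Nonempty then E.min' h2 - 1 else 0

lemma psi_ge_iff {E : Finset ℝ} {ε : ℝ} (hε : 0 < ε) {u : ℝ} (hu : u ∈ E) (y : ℝ) :
    u ≤ psi E ε y ↔ fm E ε u - ε ≤ y := by
  constructor
  · -- contrapositive: y < fm u - ε → psi < u
    intro hpsi
    by_contra hy
    push_neg at hy
    unfold psi at hpsi
    by_cases h : (E.filter (fun e => fm E ε e - ε ≤ y)).Nonempty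
    · rw [dif_pos h] at hpsi
      set t := (E.filter (fun e => fm E ε e - ε ≤ y)).max' h with ht
      have htmem := (E.filter (fun e => fm E ε e - ε ≤ y)).max'_mem h
      rw [Finset.mem_filter] at htmem
      -- fm t - ε ≤ y < fm u - ε so fm t < fm u hence t < u
      have htu : t < u := by
        by_contra hc
        push_neg at hc
        have := fm_mono E hε.le hc
        linarith [htmem.2]
      split_ifs at hpsi with hpl
      · linarith
      · have := above_lt E hu htu
        linarith
    · rw [dif_neg h] at hpsi
      have hEne : E.Nonempty := ⟨u, hu⟩
      rw [dif_pos hEne] at hpsi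
      have := E.min'_le u hu
      linarith
  · intro hy
    have humem : u ∈ E.filter (fun e => fm E ε e - ε ≤ y) := Finset.mem_filter.mpr ⟨hu, hy⟩
    have h : (E.filter (fun e => fm E ε e - ε ≤ y)).Nonempty := ⟨u, humem⟩
    unfold psi
    rw [dif_pos h]
    have hut : u ≤ (E.filter (fun e => fm E ε e - ε ≤ y)).max' h := Finset.le_max' _ u humem
    split_ifs with hpl
    · exact hut
    · exact le_of_lt (lt_of_le_of_lt hut (above_gt E _))

lemma psi_le_iff {E : Finset ℝ} {ε : ℝ} (hε : 0 < ε) {v : ℝ} (hv : v ∈ E) (y : ℝ) :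
    psi E ε y ≤ v ↔ y ≤ fm E ε v + ε := by
  constructor
  · -- contrapositive: y > fm v + ε → psi > v
    intro hpsi
    by_contra hy
    push_neg at hy
    have hvmem : v ∈ E.filter (fun e => fm E ε e - ε ≤ y) := by
      rw [Finset.mem_filter]
      exact ⟨hv, by linarith⟩
    have h : (E.filter (fun e => fm E ε e - ε ≤ y)).Nonempty := ⟨v, hvmem⟩
    unfold psi at hpsi
    rw [dif_pos h] at hpsi
    set t := (E.filter (fun e => fm E ε e - ε ≤ y)).max' h with ht
    have hvt : v ≤ t := Finset.le_max' _ v hvmem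
    split_ifs at hpsi with hpl
    · -- psi = t ≤ v so t = v, but then y ≤ fm v + ε contradiction
      have : t = v := le_antisymm hpsi hvt
      rw [this] at hpl
      linarith
    · have := above_gt E t
      linarith
  · intro hy
    unfold psi
    by_cases h : (E.filter (fun e => fm E ε e - ε ≤ y)).Nonempty
    · rw [dif_pos h]
      set t := (E.filter (fun e => fm E ε e - ε ≤ y)).max' h with ht
      have htmem := (E.filter (fun e => fm E ε e - ε ≤ y)).max'_mem h
      rw [Finset.mem_filter] at htmem
      have htE : t ∈ E := htmem.1
      -- t ≤ v
      have htv : t ≤ v := by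
        by_contra hc
        push_neg at hc
        have := fm_sep E hε.le htE hc  -- wrong direction? fm v + 3ε ≤ fm t
        linarith [htmem.2]
      split_ifs with hpl
      · exact htv
      · -- gap branch: t < v since t = v would give y ≤ fm t + ε
        have htv' : t < v := by
          rcases lt_or_eq_of_le htv with h'|h'
          · exact h'
          · exfalso; rw [h'] at hpl; exact hpl hy
        exact le_of_lt (above_lt E hv htv')
    · rw [dif_neg h]
      have hEne : E.Nonempty := ⟨v, hv⟩
      rw [dif_pos hEne]
      have := E.min'_le v hv
      linarith

lemma fm_ge_iff {E : Finset ℝ} {ε : ℝ} (hε : 0 < ε) {u : ℝ} (hu : u ∈ E) (x : ℝ) :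
    fm E ε u - ε ≤ fm E ε x ↔ u ≤ x := by
  constructor
  · intro h
    by_contra hc
    push_neg at hc
    have := fm_sep E hε.le hu hc
    linarith
  · intro h
    have := fm_mono E hε.le h
    linarith

lemma fm_le_iff {E : Finset ℝ} {ε : ℝ} (hε : 0 < ε) {v : ℝ} (hv : v ∈ E) {x : ℝ}
    (hx : x ∈ E ∨ ∀ e ∈ E, e < x → ε < x - e) :
    fm E ε x ≤ fm E ε v + ε ↔ x ≤ v := by
  constructor
  · intro h
    by_contra hc
    push_neg at hc
    rcases hx with hxE | hxP
    · have := fm_sep E hε.le hxE hc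
      linarith
    · have h1 : ε < x - v := hxP v hv hc
      have h2 : (cnt E v : ℝ) ≤ cnt E x := by exact_mod_cast cnt_mono E hc.le
      unfold fm at h
      nlinarith
  · intro h
    have := fm_mono E hε.le h
    linarith

lemma exists_eps (E : Finset ℝ) :
    ∃ ε : ℝ, 0 < ε ∧ ε < 1 ∧ ∀ e ∈ E, ∀ e' ∈ E, e < e' → 3*ε < e' - e := by
  classical
  set S : Finset ℝ := ((E ×ˢ E).filter (fun p => p.1 < p.2)).image (fun p => p.2 - p.1) with hS
  by_cases h : S.Nonempty
  · have hpos : 0 < S.min' h := by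
      have hmem := S.min'_mem h
      obtain ⟨p, hp, hps⟩ := Finset.mem_image.mp hmem
      rw [Finset.mem_filter] at hp
      have hpp : 0 < p.2 - p.1 := by linarith [hp.2]
      rw [hps] at hpp
      exact hpp
    refine ⟨min (1/2) (S.min' h / 4), ?_, ?_, ?_⟩
    · exact lt_min (by norm_num) (by linarith)
    · exact lt_of_le_of_lt (min_le_left _ _) (by norm_num)
    · intro e he e' he' hlt
      have hmem : e' - e ∈ S :=
        Finset.mem_image.mpr ⟨(e, e'), Finset.mem_filter.mpr ⟨Finset.mem_product.mpr ⟨he, he'⟩, hlt⟩, rfl⟩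
      have h1 : S.min' h ≤ e' - e := S.min'_le _ hmem
      have h2 : min (1/2 : ℝ) (S.min' h / 4) ≤ S.min' h / 4 := min_le_right _ _
      linarith
  · refine ⟨1/2, by norm_num, by norm_num, ?_⟩
    intro e he e' he' hlt
    exact absurd ⟨e' - e, Finset.mem_image.mpr ⟨(e, e'),
      Finset.mem_filter.mpr ⟨Finset.mem_product.mpr ⟨he, he'⟩, hlt⟩, rfl⟩⟩ h

lemma exists_good {E : Finset ℝ} {ε : ℝ} (hε : 0 < ε) (hε1 : ε < 1)
    (hgap : ∀ e ∈ E, ∀ e' ∈ E, e < e' → 3*ε < e' - e) (x : ℝ) :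
    ∃ w : ℝ, (∀ e ∈ E, (e ≤ w ↔ e ≤ x) ∧ (w ≤ e ↔ x ≤ e)) ∧
      (w ∈ E ∨ ∀ e ∈ E, e < w → ε < w - e) := by
  classical
  by_cases hx : x ∈ E
  · exact ⟨x, fun e _ => ⟨Iff.rfl, Iff.rfl⟩, Or.inl hx⟩
  by_cases hL : (E.filter (fun e => e < x)).Nonempty
  · set t := (E.filter (fun e => e < x)).max' hL with ht
    have htmem := (E.filter (fun e => e < x)).max'_mem hL
    rw [Finset.mem_filter] at htmem
    have htE : t ∈ E := htmem.1
    have htx : t < x := htmem.2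
    -- every element of E below x is ≤ t ; others are > x
    have hkey : ∀ e ∈ E, e ≤ t ∨ x < e := by
      intro e he
      rcases lt_trichotomy e x with h'|h'|h'
      · exact Or.inl (Finset.le_max' (E.filter (fun u => u < x)) e (Finset.mem_filter.mpr ⟨he, h'⟩))
      · rw [h'] at he; exact absurd he hx
      · exact Or.inr h'
    by_cases hR : (E.filter (fun e => x < e)).Nonempty
    · set s := (E.filter (fun e => x < e)).min' hR with hs
      have hsmem := (E.filter (fun e => x < e)).min'_mem hR
      rw [Finset.mem_filter] at hsmem
      have hsE : s ∈ E := hsmem.1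
      have hxs : x < s := hsmem.2
      have hts : t < s := htx.trans hxs
      set w := t + min ((s - t)/2) 1 with hw
      have hminpos : 0 < min ((s - t)/2) 1 := lt_min (by linarith) (by norm_num)
      have htw : t < w := by rw [hw]; linarith
      have hws : w < s := by
        have : min ((s - t)/2) 1 ≤ (s - t)/2 := min_le_left _ _
        rw [hw]; linarith
      have hclass : ∀ e ∈ E, e ≤ t ∨ s ≤ e := by
        intro e he
        rcases hkey e he with h'|h'
        · exact Or.inl h'
        · exact Or.inr (Finset.min'_le _ e (Finset.mem_filter.mpr ⟨he, h'⟩))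
      refine ⟨w, ?_, Or.inr ?_⟩
      · intro e he
        rcases hclass e he with h'|h'
        · constructor
          · constructor <;> intro _ <;> linarith
          · constructor <;> intro h'' <;> exfalso <;> linarith
        · constructor
          · constructor <;> intro h'' <;> exfalso <;> linarith
          · constructor <;> intro _ <;> linarith
      · intro e he hew
        have het : e ≤ t := by
          rcases hclass e he with h'|h'
          · exact h'
          · exfalso; linarith
        have hgap2 : 3*ε < s - t := hgap t htE s hsE hts
        have : ε < min ((s - t)/2) 1 := lt_min (by linarith) hε1
        rw [hw] at hew ⊢
        linarith
    · -- no elements above x : all of E is ≤ t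
      set w := t + 1 with hw
      have hall : ∀ e ∈ E, e ≤ t := by
        intro e he
        rcases hkey e he with h'|h'
        · exact h'
        · exact absurd ⟨e, Finset.mem_filter.mpr ⟨he, h'⟩⟩ hR
      refine ⟨w, ?_, Or.inr ?_⟩
      · intro e he
        have := hall e he
        constructor
        · constructor <;> intro _ <;> linarith
        · constructor <;> intro h'' <;> exfalso <;> linarith
      · intro e he hew
        have := hall e he
        rw [hw] at hew ⊢
        linarith
  · -- no elements below x
    refine ⟨x, fun e _ => ⟨Iff.rfl, Iff.rfl⟩, Or.inr ?_⟩
    intro e he hex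
    exact absurd ⟨e, Finset.mem_filter.mpr ⟨he, hex⟩⟩ hL

end CRWPE

namespace CRWPE

lemma mem_atomOf {n : ℕ} {X : Type*} {U : Fin n → Set X} {σ : Finset (Fin n)} {x : X} :
    x ∈ atomOf U σ ↔ (∀ i ∈ σ, x ∈ U i) ∧ ∀ j, j ∉ σ → x ∉ U j := by
  simp [atomOf, Finset.mem_compl]

end CRWPE

/-- A code realized by nonempty compact intervals (possibly singletons) has a
realization by nondegenerate compact intervals whose epsilon distance is
strictly positive. -/
theorem closed_realization_with_positive_epsilon {n : ℕ} (C : Set (Finset (Fin n)))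
    (a b : Fin n → ℝ) (hab : ∀ i, a i ≤ b i)
    (hreal : Realizes (fun i => Set.Icc (a i) (b i)) C) :
    ∃ a' b' : Fin n → ℝ, (∀ i, a' i < b' i) ∧
      Realizes (fun i => Set.Icc (a' i) (b' i)) C ∧
      (∀ i j : Fin n, b' i ≠ a' j) := by
  classical
  open CRWPE in
  set E : Finset ℝ := Finset.image a Finset.univ ∪ Finset.image b Finset.univ with hE
  have haE : ∀ i, a i ∈ E := fun i =>
    Finset.mem_union_left _ (Finset.mem_image_of_mem a (Finset.mem_univ i))
  have hbE : ∀ i, b i ∈ E := fun i =>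
    Finset.mem_union_right _ (Finset.mem_image_of_mem b (Finset.mem_univ i))
  obtain ⟨ε, hε, hε1, hgap⟩ := CRWPE.exists_eps E
  refine ⟨fun i => CRWPE.fm E ε (a i) - ε, fun i => CRWPE.fm E ε (b i) + ε, ?_, ?_, ?_⟩
  · intro i
    have := CRWPE.fm_mono E hε.le (hab i)
    show CRWPE.fm E ε (a i) - ε < CRWPE.fm E ε (b i) + ε
    linarith
  · rw [Realizes] at hreal ⊢
    rw [hreal]
    ext σ
    simp only [Set.mem_setOf_eq]
    constructor
    · rintro ⟨x, hx⟩
      obtain ⟨w, hw1, hw2⟩ := CRWPE.exists_good hε hε1 hgap x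
      rw [CRWPE.mem_atomOf] at hx
      have hwatom : (∀ i ∈ σ, a i ≤ w ∧ w ≤ b i) ∧ ∀ j, j ∉ σ → ¬(a j ≤ w ∧ w ≤ b j) := by
        constructor
        · intro i hi
          have := hx.1 i hi
          rw [Set.mem_Icc] at this
          exact ⟨(hw1 (a i) (haE i)).1.mpr this.1, (hw1 (b i) (hbE i)).2.mpr this.2⟩
        · intro j hj hc
          apply hx.2 j hj
          rw [Set.mem_Icc]
          exact ⟨(hw1 (a j) (haE j)).1.mp hc.1, (hw1 (b j) (hbE j)).2.mp hc.2⟩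
      refine ⟨CRWPE.fm E ε w, CRWPE.mem_atomOf.mpr ⟨?_, ?_⟩⟩
      · intro i hi
        rw [Set.mem_Icc]
        obtain ⟨h1, h2⟩ := hwatom.1 i hi
        exact ⟨(CRWPE.fm_ge_iff hε (haE i) w).mpr h1,
          by linarith [(CRWPE.fm_le_iff hε (hbE i) hw2).mpr h2]⟩
      · intro j hj hc
        rw [Set.mem_Icc] at hc
        apply hwatom.2 j hj
        exact ⟨(CRWPE.fm_ge_iff hε (haE j) w).mp hc.1,
          (CRWPE.fm_le_iff hε (hbE j) hw2).mp hc.2⟩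
    · rintro ⟨y, hy⟩
      rw [CRWPE.mem_atomOf] at hy
      refine ⟨CRWPE.psi E ε y, CRWPE.mem_atomOf.mpr ⟨?_, ?_⟩⟩
      · intro i hi
        have := hy.1 i hi
        rw [Set.mem_Icc] at this ⊢
        exact ⟨(CRWPE.psi_ge_iff hε (haE i) y).mpr (by linarith [this.1]),
          (CRWPE.psi_le_iff hε (hbE i) y).mpr (by linarith [this.2])⟩
      · intro j hj hc
        rw [Set.mem_Icc] at hc
        apply hy.2 j hj
        rw [Set.mem_Icc]
        constructor
        · have := (CRWPE.psi_ge_iff hε (haE j) y).mp hc.1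
          linarith
        · have := (CRWPE.psi_le_iff hε (hbE j) y).mp hc.2
          linarith
  · intro i j hc
    have hc' : CRWPE.fm E ε (b i) + ε = CRWPE.fm E ε (a j) - ε := hc
    rcases lt_trichotomy (b i) (a j) with h | h | h
    · have := CRWPE.fm_sep E hε.le (haE j) h
      linarith
    · have heq : CRWPE.fm E ε (b i) = CRWPE.fm E ε (a j) := by rw [h]
      linarith
    · have := CRWPE.fm_sep E hε.le (hbE i) h
      linarith
end

section
/- Let C be a neural code on n neurons. Then C has a realization by n nonempty bounded open intervals in ℝ if and only if C has a realization by n nonempty compact intervals in ℝ. (In other words, a code is open convex with minimum embedding dimension 1 if and only if it is closed convex with minimum embedding dimension 1.) -/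
private noncomputable def gapOf (E : Finset ℝ) : ℝ :=
  if h : ((E ×ˢ E).filter fun p => p.1 < p.2).Nonempty
  then ((E ×ˢ E).filter fun p => p.1 < p.2).inf' h (fun p => p.2 - p.1) else 1

lemma gapOf_pos (E : Finset ℝ) : 0 < gapOf E := by
  unfold gapOf
  split_ifs with h
  · rw [Finset.lt_inf'_iff]
    intro p hp
    simp only [Finset.mem_filter, Finset.mem_product] at hp
    linarith [hp.2]
  · norm_num

lemma gapOf_le {E : Finset ℝ} {e e' : ℝ} (he : e ∈ E) (he' : e' ∈ E) (h : e < e') :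
    e + gapOf E ≤ e' := by
  have hmem : (e, e') ∈ (E ×ˢ E).filter fun p => p.1 < p.2 := by
    simp [Finset.mem_filter, Finset.mem_product, he, he', h]
  have hne : ((E ×ˢ E).filter fun p => p.1 < p.2).Nonempty := ⟨_, hmem⟩
  unfold gapOf
  rw [dif_pos hne]
  have h2 := Finset.inf'_le (fun p : ℝ × ℝ => p.2 - p.1) hmem
  simp only at h2
  linarith

lemma mem_atomOf {n : ℕ} {X : Type*} {U : Fin n → Set X} {σ : Finset (Fin n)} {x : X} :
    x ∈ atomOf U σ ↔ ∀ i, x ∈ U i ↔ i ∈ σ := by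
  simp only [atomOf, Set.mem_diff, Set.mem_iInter, Set.mem_iUnion, Finset.mem_compl,
    not_exists]
  constructor
  · rintro ⟨h1, h2⟩ i
    constructor
    · intro hx
      by_contra hi
      exact h2 i hi hx
    · exact h1 i
  · intro h
    exact ⟨fun i hi => (h i).mpr hi, fun i hi hx => hi ((h i).mp hx)⟩

lemma realizes_congr {n : ℕ} {X Y : Type*} {U : Fin n → Set X} {V : Fin n → Set Y}
    (h1 : ∀ x, ∃ y, ∀ i, x ∈ U i ↔ y ∈ V i)
    (h2 : ∀ y, ∃ x, ∀ i, x ∈ U i ↔ y ∈ V i)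
    {C : Set (Finset (Fin n))} (hC : Realizes U C) : Realizes V C := by
  rw [Realizes] at hC ⊢
  rw [hC]
  ext σ
  simp only [Set.mem_setOf_eq]
  constructor
  · rintro ⟨x, hx⟩
    obtain ⟨y, hy⟩ := h1 x
    exact ⟨y, mem_atomOf.mpr fun i => (hy i).symm.trans (mem_atomOf.mp hx i)⟩
  · rintro ⟨y, hy⟩
    obtain ⟨x, hx⟩ := h2 y
    exact ⟨x, mem_atomOf.mpr fun i => (hx i).trans (mem_atomOf.mp hy i)⟩

lemma key1 {n : ℕ} (a b : Fin n → ℝ) (hab : ∀ i, a i < b i) :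
    ∃ a' b' : Fin n → ℝ, (∀ i, a' i ≤ b' i) ∧
      (∀ x : ℝ, ∃ y : ℝ, ∀ i, (x ∈ Set.Ioo (a i) (b i) ↔ y ∈ Set.Icc (a' i) (b' i))) ∧
      (∀ y : ℝ, ∃ x : ℝ, ∀ i, (x ∈ Set.Ioo (a i) (b i) ↔ y ∈ Set.Icc (a' i) (b' i))) := by
  classical
  set E : Finset ℝ := (Finset.univ.image a) ∪ (Finset.univ.image b) with hE
  have haE : ∀ i, a i ∈ E := fun i => by
    simp [hE, Finset.mem_union, Finset.mem_image]
  have hbE : ∀ i, b i ∈ E := fun i => by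
    simp [hE, Finset.mem_union, Finset.mem_image]
  set g : ℝ := gapOf E with hgdef
  have hg : 0 < g := gapOf_pos E
  have hgap : ∀ {e e' : ℝ}, e ∈ E → e' ∈ E → e < e' → e + g ≤ e' :=
    fun he he' h => gapOf_le he he' h
  refine ⟨fun i => a i + g/4, fun i => b i - g/4, ?_, ?_, ?_⟩
  · intro i
    have := hgap (haE i) (hbE i) (hab i)
    linarith
  · -- forward: for every x there is y with matching codeword
    intro x
    by_cases hxE : x ∈ E
    · refine ⟨x, fun i => ?_⟩
      simp only [Set.mem_Ioo, Set.mem_Icc]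
      constructor
      · rintro ⟨h1, h2⟩
        have g1 := hgap (haE i) hxE h1
        have g2 := hgap hxE (hbE i) h2
        constructor <;> linarith
      · rintro ⟨h1, h2⟩
        constructor <;> linarith
    · by_cases hσ : ∃ i, x ∈ Set.Ioo (a i) (b i)
      · obtain ⟨i0, hi0⟩ := hσ
        have hF : (E.filter (· < x)).Nonempty :=
          ⟨a i0, by simp only [Finset.mem_filter]; exact ⟨haE i0, hi0.1⟩⟩
        set L : ℝ := (E.filter (· < x)).max' hF with hLdef
        have hLmem : L ∈ E ∧ L < x := by
          have := (E.filter (· < x)).max'_mem hF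
          simpa only [Finset.mem_filter] using this
        have hLmax : ∀ e ∈ E, e < x → e ≤ L := fun e he hex =>
          Finset.le_max' _ e (by simp only [Finset.mem_filter]; exact ⟨he, hex⟩)
        refine ⟨L + g/2, fun i => ?_⟩
        simp only [Set.mem_Ioo, Set.mem_Icc]
        constructor
        · rintro ⟨h1, h2⟩
          have hai : a i ≤ L := hLmax _ (haE i) h1
          have hbi : L + g ≤ b i := hgap hLmem.1 (hbE i) (lt_trans hLmem.2 h2)
          constructor <;> linarith
        · rintro ⟨h1, h2⟩
          constructor
          · by_contra hle
            push_neg at hle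
            have hax : x < a i := lt_of_le_of_ne hle (fun h => hxE (h ▸ haE i))
            have : L + g ≤ a i := hgap hLmem.1 (haE i) (lt_trans hLmem.2 hax)
            linarith
          · by_contra hle
            push_neg at hle
            have hbx : b i < x := lt_of_le_of_ne hle (fun h => hxE (h.symm ▸ hbE i))
            have : b i ≤ L := hLmax _ (hbE i) hbx
            linarith
      · push_neg at hσ
        refine ⟨1 + ∑ j, |b j|, fun i => ?_⟩
        constructor
        · intro hx
          exact absurd hx (hσ i)
        · rintro ⟨h1, h2⟩
          exfalso
          have hb1 : |b i| ≤ ∑ j, |b j| :=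
            Finset.single_le_sum (fun j _ => abs_nonneg (b j)) (Finset.mem_univ i)
          have hb2 : b i ≤ |b i| := le_abs_self _
          simp only at h2
          linarith
  · -- backward: for every y there is x with matching codeword
    intro y
    by_cases hEy : ∃ e ∈ E, |y - e| ≤ g/4
    · obtain ⟨e, heE, he⟩ := hEy
      rw [abs_le] at he
      rcases eq_or_lt_of_le he.2 with h2 | h2
      · -- y = e + g/4
        have hy : y = e + g/4 := by linarith
        refine ⟨e + g/2, fun i => ?_⟩
        simp only [Set.mem_Ioo, Set.mem_Icc]
        constructor
        · rintro ⟨ha1, hb1⟩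
          have hae : a i ≤ e := by
            by_contra hlt
            push_neg at hlt
            have := hgap heE (haE i) hlt
            linarith
          have hbe : e + g ≤ b i := hgap heE (hbE i) (by linarith)
          constructor <;> linarith
        · rintro ⟨ha1, hb1⟩
          have hbe : e + g ≤ b i := hgap heE (hbE i) (by linarith)
          constructor <;> linarith
      · rcases eq_or_lt_of_le he.1 with h1 | h1
        · -- y = e - g/4
          have hy : y = e - g/4 := by linarith
          refine ⟨e - g/2, fun i => ?_⟩
          simp only [Set.mem_Ioo, Set.mem_Icc]
          constructor
          · rintro ⟨ha1, hb1⟩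
            have hae : a i + g ≤ e := hgap (haE i) heE (by linarith)
            have hbe : e ≤ b i := by
              by_contra hlt
              push_neg at hlt
              have := hgap (hbE i) heE hlt
              linarith
            constructor <;> linarith
          · rintro ⟨ha1, hb1⟩
            have hae : a i + g ≤ e := hgap (haE i) heE (by linarith)
            constructor <;> linarith
        · -- e - g/4 < y < e + g/4 : x = e
          refine ⟨e, fun i => ?_⟩
          simp only [Set.mem_Ioo, Set.mem_Icc]
          constructor
          · rintro ⟨ha1, hb1⟩
            have hae : a i + g ≤ e := hgap (haE i) heE ha1
            have hbe : e + g ≤ b i := hgap heE (hbE i) hb1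
            constructor <;> linarith
          · rintro ⟨ha1, hb1⟩
            constructor <;> linarith
    · push_neg at hEy
      refine ⟨y, fun i => ?_⟩
      simp only [Set.mem_Ioo, Set.mem_Icc]
      constructor
      · rintro ⟨ha1, hb1⟩
        have h1 := hEy _ (haE i)
        have h2 := hEy _ (hbE i)
        rw [lt_abs] at h1 h2
        constructor
        · rcases h1 with h | h <;> linarith
        · rcases h2 with h | h <;> linarith
      · rintro ⟨ha1, hb1⟩
        constructor <;> linarith

lemma key2 {n : ℕ} (a b : Fin n → ℝ) (hab : ∀ i, a i ≤ b i) :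
    ∃ a' b' : Fin n → ℝ, (∀ i, a' i < b' i) ∧
      (∀ x : ℝ, ∃ y : ℝ, ∀ i, (x ∈ Set.Icc (a i) (b i) ↔ y ∈ Set.Ioo (a' i) (b' i))) ∧
      (∀ y : ℝ, ∃ x : ℝ, ∀ i, (x ∈ Set.Icc (a i) (b i) ↔ y ∈ Set.Ioo (a' i) (b' i))) := by
  classical
  set E : Finset ℝ := (Finset.univ.image a) ∪ (Finset.univ.image b) with hE
  have haE : ∀ i, a i ∈ E := fun i => by
    simp [hE, Finset.mem_union, Finset.mem_image]
  have hbE : ∀ i, b i ∈ E := fun i => by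
    simp [hE, Finset.mem_union, Finset.mem_image]
  set g : ℝ := gapOf E with hgdef
  have hg : 0 < g := gapOf_pos E
  have hgap : ∀ {e e' : ℝ}, e ∈ E → e' ∈ E → e < e' → e + g ≤ e' :=
    fun he he' h => gapOf_le he he' h
  refine ⟨fun i => a i - g/4, fun i => b i + g/4, ?_, ?_, ?_⟩
  · intro i
    have := hab i
    linarith
  · -- forward: closed point x ↦ open point y
    intro x
    by_cases hxE : x ∈ E
    · refine ⟨x, fun i => ?_⟩
      simp only [Set.mem_Ioo, Set.mem_Icc]
      constructor
      · rintro ⟨h1, h2⟩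
        constructor <;> linarith
      · rintro ⟨h1, h2⟩
        constructor
        · by_contra hlt
          push_neg at hlt
          have := hgap hxE (haE i) hlt
          linarith
        · by_contra hlt
          push_neg at hlt
          have := hgap (hbE i) hxE hlt
          linarith
    · by_cases hσ : ∃ i, x ∈ Set.Icc (a i) (b i)
      · obtain ⟨i0, hi0⟩ := hσ
        have hax : a i0 < x := lt_of_le_of_ne hi0.1 (fun h => hxE (h ▸ haE i0))
        have hF : (E.filter (· < x)).Nonempty :=
          ⟨a i0, by simp only [Finset.mem_filter]; exact ⟨haE i0, hax⟩⟩
        set L : ℝ := (E.filter (· < x)).max' hF with hLdef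
        have hLmem : L ∈ E ∧ L < x := by
          have := (E.filter (· < x)).max'_mem hF
          simpa only [Finset.mem_filter] using this
        have hLmax : ∀ e ∈ E, e < x → e ≤ L := fun e he hex =>
          Finset.le_max' _ e (by simp only [Finset.mem_filter]; exact ⟨he, hex⟩)
        refine ⟨L + g/2, fun i => ?_⟩
        simp only [Set.mem_Ioo, Set.mem_Icc]
        constructor
        · rintro ⟨h1, h2⟩
          have hai : a i < x := lt_of_le_of_ne h1 (fun h => hxE (h ▸ haE i))
          have haiL : a i ≤ L := hLmax _ (haE i) hai
          have hbi : x < b i := lt_of_le_of_ne h2 (fun h => hxE (h.symm ▸ hbE i))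
          have hbiL : L + g ≤ b i := hgap hLmem.1 (hbE i) (lt_trans hLmem.2 hbi)
          constructor <;> linarith
        · rintro ⟨h1, h2⟩
          constructor
          · by_contra hle
            push_neg at hle
            have : L + g ≤ a i := hgap hLmem.1 (haE i) (lt_trans hLmem.2 hle)
            linarith
          · by_contra hle
            push_neg at hle
            have : b i ≤ L := hLmax _ (hbE i) hle
            linarith
      · push_neg at hσ
        refine ⟨1 + g/4 + ∑ j, |b j|, fun i => ?_⟩
        constructor
        · intro hx
          exact absurd hx (hσ i)
        · rintro ⟨h1, h2⟩
          exfalso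
          have hb1 : |b i| ≤ ∑ j, |b j| :=
            Finset.single_le_sum (fun j _ => abs_nonneg (b j)) (Finset.mem_univ i)
          have hb2 : b i ≤ |b i| := le_abs_self _
          simp only at h2
          linarith
  · -- backward: open point y ↦ closed point x
    intro y
    by_cases hEy : ∃ e ∈ E, |y - e| < g/4
    · obtain ⟨e, heE, he⟩ := hEy
      rw [abs_lt] at he
      refine ⟨e, fun i => ?_⟩
      simp only [Set.mem_Ioo, Set.mem_Icc]
      constructor
      · rintro ⟨h1, h2⟩
        constructor <;> linarith
      · rintro ⟨h1, h2⟩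
        constructor
        · by_contra hlt
          push_neg at hlt
          have := hgap heE (haE i) hlt
          linarith
        · by_contra hlt
          push_neg at hlt
          have := hgap (hbE i) heE hlt
          linarith
    · push_neg at hEy
      refine ⟨y, fun i => ?_⟩
      simp only [Set.mem_Ioo, Set.mem_Icc]
      constructor
      · rintro ⟨h1, h2⟩
        constructor <;> linarith
      · rintro ⟨h1, h2⟩
        have ha1 := hEy _ (haE i)
        have hb1 := hEy _ (hbE i)
        rw [le_abs] at ha1 hb1
        constructor
        · rcases ha1 with h | h <;> linarith
        · rcases hb1 with h | h <;> linarith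

/-- A code has a realization by nonempty bounded open intervals of `ℝ` if and only if
it has a realization by nonempty compact intervals of `ℝ`. -/
theorem open_convex_iff_closed_convex_dim_one {n : ℕ} (C : Set (Finset (Fin n))) :
    (∃ a b : Fin n → ℝ, (∀ i, a i < b i) ∧
      Realizes (fun i => Set.Ioo (a i) (b i)) C) ↔
    (∃ a b : Fin n → ℝ, (∀ i, a i ≤ b i) ∧
      Realizes (fun i => Set.Icc (a i) (b i)) C) := by
  constructor
  · rintro ⟨a, b, hab, hreal⟩
    obtain ⟨a', b', hab', h1, h2⟩ := key1 a b hab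
    exact ⟨a', b', hab', realizes_congr h1 h2 hreal⟩
  · rintro ⟨a, b, hab, hreal⟩
    obtain ⟨a', b', hab', h1, h2⟩ := key2 a b hab
    exact ⟨a', b', hab', realizes_congr h1 h2 hreal⟩
end

section
/- Let C be a neural code on n neurons and suppose there are three distinct elements i, j, k ∈ [n] and a codeword σ ⊆ [n] with {i, j, k} ⊆ σ such that the four codewords {i}, {j}, {k}, and σ all belong to C. Then there is no collection of n convex subsets of ℝ that realizes C; that is, C has no convex realization in dimension 1. -/
lemma middle_helper {A B : Set ℝ} (hA : Convex ℝ A) (hB : Convex ℝ B)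
    {a b c p : ℝ} (ha : a ∈ A) (hc : c ∈ B) (hpA : p ∈ A) (hpB : p ∈ B)
    (hbA : b ∉ A) (hbB : b ∉ B) (hab : a ≤ b) (hbc : b ≤ c) : False := by
  rcases le_total p b with h | h
  · exact hbB (hB.ordConnected.out hpB hc ⟨h, hbc⟩)
  · exact hbA (hA.ordConnected.out ha hpA ⟨hab, h⟩)

/-- A code containing `{i}, {j}, {k}` and a codeword `σ ⊇ {i,j,k}` (for distinct
`i, j, k`) has no convex realization in dimension 1. -/
theorem no_convex_realization_dim_one {n : ℕ} (C : Set (Finset (Fin n)))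
    (i j k : Fin n) (σ : Finset (Fin n))
    (hij : i ≠ j) (hik : i ≠ k) (hjk : j ≠ k)
    (hsub : ({i, j, k} : Finset (Fin n)) ⊆ σ)
    (hi : ({i} : Finset (Fin n)) ∈ C) (hj : ({j} : Finset (Fin n)) ∈ C)
    (hk : ({k} : Finset (Fin n)) ∈ C) (hσ : σ ∈ C) :
    ¬ ∃ U : Fin n → Set ℝ, (∀ l, Convex ℝ (U l)) ∧ Realizes U C := by
  rintro ⟨U, hconv, hreal⟩
  rw [Realizes] at hreal
  rw [hreal, Set.mem_setOf_eq] at hi hj hk hσ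
  obtain ⟨a, haM, haN⟩ := hi
  obtain ⟨b, hbM, hbN⟩ := hj
  obtain ⟨c, hcM, hcN⟩ := hk
  obtain ⟨p, hpM, hpN⟩ := hσ
  simp only [Set.mem_iInter] at haM hbM hcM hpM
  simp only [Set.mem_iUnion, not_exists] at haN hbN hcN
  have hii : i ∈ σ := hsub (by simp)
  have hjj : j ∈ σ := hsub (by simp)
  have hkk : k ∈ σ := hsub (by simp)
  have hai : a ∈ U i := haM i (Finset.mem_singleton_self i)
  have hbj : b ∈ U j := hbM j (Finset.mem_singleton_self j)
  have hck : c ∈ U k := hcM k (Finset.mem_singleton_self k)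
  have hpi : p ∈ U i := hpM i hii
  have hpj : p ∈ U j := hpM j hjj
  have hpk : p ∈ U k := hpM k hkk
  have haj : a ∉ U j := haN j (Finset.mem_compl.2 (by simp [hij.symm]))
  have hak : a ∉ U k := haN k (Finset.mem_compl.2 (by simp [hik.symm]))
  have hbi : b ∉ U i := hbN i (Finset.mem_compl.2 (by simp [hij]))
  have hbk : b ∉ U k := hbN k (Finset.mem_compl.2 (by simp [hjk.symm]))
  have hci : c ∉ U i := hcN i (Finset.mem_compl.2 (by simp [hik]))
  have hcj : c ∉ U j := hcN j (Finset.mem_compl.2 (by simp [hjk]))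
  rcases le_total a b with hab | hab <;> rcases le_total b c with hbc | hbc <;>
    rcases le_total a c with hac | hac
  · exact middle_helper (hconv i) (hconv k) hai hck hpi hpk hbi hbk hab hbc
  · exact middle_helper (hconv i) (hconv k) hai hck hpi hpk hbi hbk hab hbc
  · exact middle_helper (hconv i) (hconv j) hai hbj hpi hpj hci hcj hac hbc
  · exact middle_helper (hconv k) (hconv j) hck hbj hpk hpj hak haj hac hab
  · exact middle_helper (hconv j) (hconv k) hbj hck hpj hpk haj hak hab hac
  · exact middle_helper (hconv j) (hconv i) hbj hai hpj hpi hcj hci hbc hac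
  · exact middle_helper (hconv k) (hconv i) hck hai hpk hpi hbk hbi hbc hab
  · exact middle_helper (hconv k) (hconv i) hck hai hpk hpi hbk hbi hbc hab
end

section
/- Let C be a neural code on n neurons, let i, j, k ∈ [n] be three distinct elements, and let σ_ij, σ_ik, σ_jk ⊆ [n] be codewords such that i, j ∈ σ_ij and k ∉ σ_ij, i, k ∈ σ_ik and j ∉ σ_ik, and j, k ∈ σ_jk and i ∉ σ_jk. If the six codewords {i}, {j}, {k}, σ_ij, σ_ik, σ_jk all belong to C, then there is no collection of n convex subsets of ℝ that realizes C; that is, C has no convex realization in dimension 1. -/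
lemma atom_mem {n : ℕ} {X : Type*} {U : Fin n → Set X} {σ : Finset (Fin n)} {x : X}
    (hx : x ∈ atomOf U σ) {l : Fin n} (hl : l ∈ σ) : x ∈ U l := by
  have := hx.1
  simp only [Set.mem_iInter] at this
  exact this l hl

lemma atom_not_mem {n : ℕ} {X : Type*} {U : Fin n → Set X} {σ : Finset (Fin n)} {x : X}
    (hx : x ∈ atomOf U σ) {l : Fin n} (hl : l ∉ σ) : x ∉ U l := by
  intro hxl
  exact hx.2 (Set.mem_iUnion₂.mpr ⟨l, Finset.mem_compl.mpr hl, hxl⟩)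

/-- A code containing `{i}, {j}, {k}` together with codewords `σ_ij, σ_ik, σ_jk`
(each containing exactly the indicated two of the three distinct neurons
`i, j, k`) has no convex realization in dimension 1. -/
theorem no_convex_realization_dim_one' {n : ℕ} (C : Set (Finset (Fin n)))
    (i j k : Fin n) (σij σik σjk : Finset (Fin n))
    (hij : i ≠ j) (hik : i ≠ k) (hjk : j ≠ k)
    (hσij : i ∈ σij ∧ j ∈ σij ∧ k ∉ σij)
    (hσik : i ∈ σik ∧ k ∈ σik ∧ j ∉ σik)
    (hσjk : j ∈ σjk ∧ k ∈ σjk ∧ i ∉ σjk)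
    (hi : ({i} : Finset (Fin n)) ∈ C) (hj : ({j} : Finset (Fin n)) ∈ C)
    (hk : ({k} : Finset (Fin n)) ∈ C)
    (h1 : σij ∈ C) (h2 : σik ∈ C) (h3 : σjk ∈ C) :
    ¬ ∃ U : Fin n → Set ℝ, (∀ l, Convex ℝ (U l)) ∧ Realizes U C := by
  rintro ⟨U, hU, hreal⟩
  rw [Realizes] at hreal
  rw [hreal] at h1 h2 h3
  obtain ⟨a, ha⟩ := h1
  obtain ⟨b, hb⟩ := h2
  obtain ⟨c, hc⟩ := h3
  have ha1 : a ∈ U i := atom_mem ha hσij.1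
  have ha2 : a ∈ U j := atom_mem ha hσij.2.1
  have ha3 : a ∉ U k := atom_not_mem ha hσij.2.2
  have hb1 : b ∈ U i := atom_mem hb hσik.1
  have hb2 : b ∈ U k := atom_mem hb hσik.2.1
  have hb3 : b ∉ U j := atom_not_mem hb hσik.2.2
  have hc1 : c ∈ U j := atom_mem hc hσjk.1
  have hc2 : c ∈ U k := atom_mem hc hσjk.2.1
  have hc3 : c ∉ U i := atom_not_mem hc hσjk.2.2
  have key : ∀ l : Fin n, ∀ x y z : ℝ, x ∈ U l → y ∈ U l → x ≤ z → z ≤ y → z ∈ U l :=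
    fun l x y z hx hy hxz hzy => (hU l).ordConnected.out hx hy ⟨hxz, hzy⟩
  rcases le_total a b with h1 | h1 <;> rcases le_total b c with h2 | h2 <;>
    rcases le_total a c with h3 | h3
  · exact hb3 (key j a c b ha2 hc1 h1 h2)
  · exact hb3 (key j a c b ha2 hc1 h1 h2)
  · exact hc3 (key i a b c ha1 hb1 h3 h2)
  · exact ha3 (key k c b a hc2 hb2 h3 h1)
  · exact ha3 (key k b c a hb2 hc2 h1 h3)
  · exact hc3 (key i b a c hb1 ha1 h2 h3)
  · exact hb3 (key j c a b hc1 ha2 h2 h1)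
  · exact hb3 (key j c a b hc1 ha2 h2 h1)
end

section
/- Let C ⊆ {0,1}^n and D ⊆ {0,1}^m be neural codes and let q : C → D be a bijective code map such that both q and its inverse q^{-1} correspond to neural ring homomorphisms (i.e., q is a composition of permutations of neurons and operations of adding/deleting trivial or duplicate neurons). Then a codeword τ ∈ C is a maximal codeword of C if and only if q(τ) is a maximal codeword of D. -/
/-- `τ` is a maximal codeword of `C ⊆ {0,1}^n`: its support is not properly contained
in the support of another codeword. -/
def IsMaximalIn {n : ℕ} (C : Set (Fin n → Bool)) (τ : Fin n → Bool) : Prop :=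
  τ ∈ C ∧ ∀ c ∈ C, (∀ i, τ i ≤ c i) → c = τ

/-- The code map `q : C → D` corresponds to a neural ring homomorphism: each
coordinate of `q` is either constant on `C` or equals some coordinate function. -/
def IsNRHCodeMap {n m : ℕ} (C : Set (Fin n → Bool))
    (q : (Fin n → Bool) → (Fin m → Bool)) : Prop :=
  ∀ j : Fin m, (∃ b : Bool, ∀ c ∈ C, q c j = b) ∨ (∃ i : Fin n, ∀ c ∈ C, q c j = c i)

/-- Through a code map corresponding to a neural ring isomorphism, `τ` is a maximal
codeword of `C` if and only if `q τ` is a maximal codeword of `D`. -/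
theorem maximal_iff_image_maximal {n m : ℕ} (C : Set (Fin n → Bool))
    (D : Set (Fin m → Bool))
    (q : (Fin n → Bool) → (Fin m → Bool)) (r : (Fin m → Bool) → (Fin n → Bool))
    (hqCD : Set.MapsTo q C D) (hrDC : Set.MapsTo r D C)
    (hrq : ∀ c ∈ C, r (q c) = c) (hqr : ∀ d ∈ D, q (r d) = d)
    (hq : IsNRHCodeMap C q) (hr : IsNRHCodeMap D r)
    (τ : Fin n → Bool) (hτ : τ ∈ C) :
    IsMaximalIn C τ ↔ IsMaximalIn D (q τ) := by
  have qmono : ∀ c ∈ C, ∀ c' ∈ C, (∀ i, c i ≤ c' i) → ∀ j, q c j ≤ q c' j := by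
    intro c hc c' hc' hle j
    rcases hq j with ⟨b, hb⟩ | ⟨i, hi⟩
    · rw [hb c hc, hb c' hc']
    · rw [hi c hc, hi c' hc']; exact hle i
  have rmono : ∀ d ∈ D, ∀ d' ∈ D, (∀ j, d j ≤ d' j) → ∀ i, r d i ≤ r d' i := by
    intro d hd d' hd' hle i
    rcases hr i with ⟨b, hb⟩ | ⟨j, hj⟩
    · rw [hb d hd, hb d' hd']
    · rw [hj d hd, hj d' hd']; exact hle j
  constructor
  · rintro ⟨-, hmax⟩
    refine ⟨hqCD hτ, fun d hd hle => ?_⟩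
    have h1 : ∀ i, τ i ≤ r d i := by
      intro i
      have := rmono (q τ) (hqCD hτ) d hd hle i
      rwa [hrq τ hτ] at this
    have h2 : r d = τ := hmax (r d) (hrDC hd) h1
    calc d = q (r d) := (hqr d hd).symm
      _ = q τ := by rw [h2]
  · rintro ⟨-, hmax⟩
    refine ⟨hτ, fun c hc hle => ?_⟩
    have h1 : q c = q τ := hmax (q c) (hqCD hc) (qmono τ hτ c hc hle)
    calc c = r (q c) := (hrq c hc).symm
      _ = r (q τ) := by rw [h1]
      _ = τ := hrq τ hτ
end

section
/- Let n ≥ 2 and let C be the circulant code with support p on n neurons, where p = 1 or p = n − 1. Then the number of neural ring endomorphisms of the neural ring R_C is exactly n! + n. -/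
/-- The circulant code with support `p` on `n` neurons: the codewords are the `n`
cyclic shifts of the vector with `p` consecutive ones followed by zeros. -/
def circCode (n p : ℕ) : Set (Fin n → Bool) :=
  {c | ∃ i : Fin n, ∀ j : Fin n, c j = decide ((j - i).val < p)}

/-- The coordinate function `x_j` of the neural ring of `C` (the ring of functions
`C → 𝔽₂` with pointwise operations). -/
def xvar {n : ℕ} (C : Set (Fin n → Bool)) (j : Fin n) : ↥C → ZMod 2 :=
  fun c => if (c : Fin n → Bool) j then 1 else 0

/-- A ring endomorphism of the neural ring of `C` is a neural ring endomorphism if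
it sends every `x_j` into `{x_1, …, x_n} ∪ {0, 1}`. -/
def IsNeuralEndo {n : ℕ} (C : Set (Fin n → Bool))
    (φ : (↥C → ZMod 2) →+* (↥C → ZMod 2)) : Prop :=
  ∀ j : Fin n, φ (xvar C j) = 0 ∨ φ (xvar C j) = 1 ∨
    ∃ i : Fin n, φ (xvar C j) = xvar C i

set_option linter.unusedSectionVars false
namespace NeuralAux

lemma zmod2_cases : ∀ s : ZMod 2, s = 0 ∨ s = 1 := by decide

lemma zmod2_add_self (b : ZMod 2) : b + b = 0 := by revert b; decide

variable {α : Type*} [Fintype α] [DecidableEq α]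

def delta (a : α) : α → ZMod 2 := fun c => if c = a then 1 else 0

lemma sum_delta : ∑ a : α, delta a = (1 : α → ZMod 2) := by
  funext c
  simp [delta, Finset.sum_apply, Finset.sum_ite_eq']

lemma expand (g : α → ZMod 2) : g = ∑ a : α, (fun _ => g a) * delta a := by
  funext c
  simp [delta, Finset.sum_apply, mul_ite, mul_one, mul_zero, Finset.sum_ite_eq']

lemma delta_mul_delta {a a' : α} (h : a ≠ a') : delta a * delta a' = 0 := by
  funext c
  by_cases h1 : c = a <;> by_cases h2 : c = a' <;>
    simp_all [delta]

lemma const_eval {R : Type*} [NonAssocSemiring R] (ψ : (α → ZMod 2) →+* R) (s : ZMod 2) :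
    ψ (fun _ => s) = (if s = 1 then 1 else 0) := by
  rcases zmod2_cases s with rfl | rfl
  · simp only [if_neg (by decide : ¬(0:ZMod 2) = 1)]
    exact (show ψ (fun _ => (0:ZMod 2)) = 0 from map_zero ψ)
  · simp only [if_pos rfl]
    exact (show ψ (fun _ => (1:ZMod 2)) = 1 from map_one ψ)

lemma ringHom_to_zmod2 (ψ : (α → ZMod 2) →+* ZMod 2) : ∃ a, ∀ g, ψ g = g a := by
  have h1 : ∑ a : α, ψ (delta a) = 1 := by rw [← map_sum, sum_delta, map_one]
  have hex : ∃ a, ψ (delta a) ≠ 0 := by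
    by_contra hc
    push_neg at hc
    rw [Finset.sum_eq_zero (fun a _ => hc a)] at h1
    exact one_ne_zero h1.symm
  obtain ⟨a₀, ha₀⟩ := hex
  have ha1 : ψ (delta a₀) = 1 := (zmod2_cases _).resolve_left ha₀
  refine ⟨a₀, fun g => ?_⟩
  have hzero : ∀ a, a ≠ a₀ → ψ (delta a) = 0 := by
    intro a ha
    have : ψ (delta a) * ψ (delta a₀) = 0 := by
      rw [← map_mul, delta_mul_delta ha, map_zero]
    rwa [ha1, mul_one] at this
  conv_lhs => rw [expand g]
  rw [map_sum]
  rw [Finset.sum_eq_single a₀]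
  · rw [map_mul, ha1, mul_one, const_eval]
    rcases zmod2_cases (g a₀) with h | h <;> simp [h]
  · intro a _ ha
    rw [map_mul, hzero a ha, mul_zero]
  · intro h; exact absurd (Finset.mem_univ a₀) h

def comp (f : α → α) : (α → ZMod 2) →+* (α → ZMod 2) :=
  Pi.ringHom fun c => Pi.evalRingHom (fun _ => ZMod 2) (f c)

lemma comp_apply (f : α → α) (g : α → ZMod 2) : comp f g = fun c => g (f c) := rfl

lemma endo_eq_comp (φ : (α → ZMod 2) →+* (α → ZMod 2)) : ∃ f, φ = comp f := by
  have hcl := fun c => ringHom_to_zmod2 ((Pi.evalRingHom (fun _ => ZMod 2) c).comp φ)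
  choose f hf using hcl
  exact ⟨f, RingHom.ext fun g => funext fun c => hf c g⟩

lemma comp_inj : Function.Injective (comp : (α → α) → _) := by
  intro f f' hff
  funext c
  have h := congrFun (congrArg (fun φ => φ (delta (f c))) hff) c
  have h2 : (1 : ZMod 2) = if f' c = f c then 1 else 0 := by
    simpa [comp_apply, delta] using h
  by_contra hne
  rw [if_neg (fun h' => hne h'.symm)] at h2
  exact (by decide : (1:ZMod 2) ≠ 0) h2


theorem abstract_count {n : ℕ} (hn : 2 ≤ n) (C : Set (Fin n → Bool))
    (e : Fin n ≃ ↥C) (b : ZMod 2) (t : Equiv.Perm (Fin n))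
    (h : ∀ j i : Fin n, xvar C j (e i) = b + (if i = t j then 1 else 0)) :
    {φ : (↥C → ZMod 2) →+* (↥C → ZMod 2) | IsNeuralEndo C φ}.ncard
      = Nat.factorial n + n := by
  haveI : Fintype ↥C := Fintype.ofEquiv _ e
  -- function-level description of xvar
  have xvar_eq : ∀ j : Fin n, xvar C j = (fun _ => b) + delta (e (t j)) := by
    intro j
    funext c
    obtain ⟨i, rfl⟩ := e.surjective c
    rw [h j i]
    simp [delta, Pi.add_apply, EmbeddingLike.apply_eq_iff_eq]
  have bb : ((fun _ => b) + (fun _ => b) : ↥C → ZMod 2) = 0 := by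
    funext c; exact zmod2_add_self b
  have delta_eq : ∀ i : Fin n, delta (e i) = (fun _ => b) + xvar C (t.symm i) := by
    intro i
    rw [xvar_eq (t.symm i), Equiv.apply_symm_apply, ← add_assoc, bb, zero_add]
  have hconst : ∀ (φ : (↥C → ZMod 2) →+* (↥C → ZMod 2)),
      φ (fun _ => b) = (fun _ => b) := by
    intro φ
    rcases zmod2_cases b with rfl | rfl
    · exact (show φ 0 = 0 from map_zero φ)
    · exact (show φ 1 = 1 from map_one φ)
  -- characterization of neural endos via delta functions
  have neural_iff : ∀ φ : (↥C → ZMod 2) →+* (↥C → ZMod 2),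
      IsNeuralEndo C φ ↔ ∀ a : ↥C, φ (delta a) = 0 ∨ φ (delta a) = 1 ∨
        ∃ a', φ (delta a) = delta a' := by
    intro φ
    constructor
    · intro hφ a
      obtain ⟨i, rfl⟩ := e.surjective a
      rw [delta_eq i, map_add, hconst]
      rcases hφ (t.symm i) with h0 | h1 | ⟨i', hi'⟩
      · rw [h0, add_zero]
        rcases zmod2_cases b with rfl | rfl
        · exact Or.inl rfl
        · exact Or.inr (Or.inl rfl)
      · rw [h1]
        rcases zmod2_cases b with rfl | rfl
        · refine Or.inr (Or.inl ?_)
          funext c; simp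
        · refine Or.inl ?_
          funext c; exact zmod2_add_self 1
      · rw [hi', xvar_eq i', ← add_assoc, bb, zero_add]
        exact Or.inr (Or.inr ⟨e (t i'), rfl⟩)
    · intro hφ j
      rw [xvar_eq j, map_add, hconst]
      rcases hφ (e (t j)) with h0 | h1 | ⟨a', ha'⟩
      · rw [h0, add_zero]
        rcases zmod2_cases b with rfl | rfl
        · exact Or.inl rfl
        · exact Or.inr (Or.inl rfl)
      · rw [h1]
        rcases zmod2_cases b with rfl | rfl
        · refine Or.inr (Or.inl ?_)
          funext c; simp
        · refine Or.inl ?_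
          funext c; exact zmod2_add_self 1
      · have hde := delta_eq (e.symm a')
        rw [Equiv.apply_symm_apply] at hde
        rw [ha', hde, ← add_assoc, bb, zero_add]
        exact Or.inr (Or.inr ⟨t.symm (e.symm a'), rfl⟩)
  -- neural endos coming from permutations
  have n1 : ∀ σ : Equiv.Perm ↥C, IsNeuralEndo C (comp ⇑σ) := by
    intro σ
    rw [neural_iff]
    intro a
    refine Or.inr (Or.inr ⟨σ.symm a, ?_⟩)
    rw [comp_apply]
    funext c
    simp only [delta]
    by_cases hc : σ c = a
    · rw [if_pos hc, if_pos (by rw [← hc, Equiv.symm_apply_apply])]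
    · rw [if_neg hc, if_neg (fun h' => hc (by rw [h', Equiv.apply_symm_apply]))]
  -- neural endos coming from constants
  have n2 : ∀ c₀ : ↥C, IsNeuralEndo C (comp (Function.const _ c₀)) := by
    intro c₀
    rw [neural_iff]
    intro a
    by_cases hc : c₀ = a
    · refine Or.inr (Or.inl ?_)
      rw [comp_apply]; funext c; simp [delta, Function.const, hc]
    · refine Or.inl ?_
      rw [comp_apply]; funext c; simp [delta, Function.const, hc]
  -- two distinct elements of ↥C
  have htwo : e ⟨0, by omega⟩ ≠ e ⟨1, by omega⟩ := by
    intro hcon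
    have := e.injective hcon
    simp [Fin.ext_iff] at this
  -- the equivalence
  have hmem : ∀ x : (Equiv.Perm ↥C) ⊕ ↥C,
      (Sum.elim (fun σ : Equiv.Perm ↥C => comp ⇑σ)
        (fun c₀ : ↥C => comp (Function.const _ c₀)) x) ∈
      {φ : (↥C → ZMod 2) →+* (↥C → ZMod 2) | IsNeuralEndo C φ} := by
    rintro (σ | c₀)
    · exact n1 σ
    · exact n2 c₀
  let F : (Equiv.Perm ↥C) ⊕ ↥C →
      {φ : (↥C → ZMod 2) →+* (↥C → ZMod 2) | IsNeuralEndo C φ} :=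
    fun x => ⟨_, hmem x⟩
  have hFbij : Function.Bijective F := by
    constructor
    · rintro (σ | c₀) (σ' | c₀') hxy <;>
        simp only [F, Subtype.mk.injEq, Sum.elim_inl, Sum.elim_inr] at hxy
      · have := comp_inj hxy
        exact congrArg Sum.inl (Equiv.coe_fn_injective this)
      · exfalso
        have hfc := comp_inj hxy
        have h1 := congrFun hfc (e ⟨0, by omega⟩)
        have h2 := congrFun hfc (e ⟨1, by omega⟩)
        exact htwo (σ.injective (h1.trans h2.symm))
      · exfalso
        have hfc := comp_inj hxy
        have h1 := congrFun hfc (e ⟨0, by omega⟩)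
        have h2 := congrFun hfc (e ⟨1, by omega⟩)
        exact htwo (σ'.injective ((h1.symm.trans h2) ))
      · have hfc := comp_inj hxy
        have h1 := congrFun hfc (e ⟨0, by omega⟩)
        exact congrArg Sum.inr h1
    · rintro ⟨φ, hφ⟩
      obtain ⟨f, rfl⟩ := endo_eq_comp φ
      have hdel := (neural_iff (comp f)).mp hφ
      by_cases hcst : ∃ a : ↥C, ∀ c : ↥C, f c = a
      · obtain ⟨a, ha⟩ := hcst
        refine ⟨Sum.inr a, ?_⟩
        simp only [F, Sum.elim_inr, Subtype.mk.injEq]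
        congr 1
        funext c
        exact (ha c).symm
      · -- f is injective, hence bijective
        have hinj : Function.Injective f := by
          intro c c' hcc
          rcases hdel (f c) with h0 | h1 | ⟨a', ha'⟩
          · exfalso
            have := congrFun h0 c
            simp [comp_apply, delta] at this
          · exfalso
            refine hcst ⟨f c, fun d => ?_⟩
            have := congrFun h1 d
            simp only [comp_apply, delta] at this
            by_contra hne
            rw [if_neg hne] at this
            exact (by decide : (0:ZMod 2) ≠ 1) this
          · have hc := congrFun ha' c
            have hc' := congrFun ha' c'
            have hc1 : delta a' c = 1 := by
              rw [← hc]; simp [comp_apply, delta]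
            have hc'1 : delta a' c' = 1 := by
              rw [← hc']; simp [comp_apply, delta, hcc]
            have e1 : c = a' := by
              by_contra hne
              rw [show delta a' c = 0 by simp [delta, hne]] at hc1
              exact (by decide : (0:ZMod 2) ≠ 1) hc1
            have e2 : c' = a' := by
              by_contra hne
              rw [show delta a' c' = 0 by simp [delta, hne]] at hc'1
              exact (by decide : (0:ZMod 2) ≠ 1) hc'1
            exact e1.trans e2.symm
        have hbij : Function.Bijective f := (Finite.injective_iff_bijective).mp hinj
        refine ⟨Sum.inl (Equiv.ofBijective f hbij), ?_⟩
        simp only [F, Sum.elim_inl, Subtype.mk.injEq]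
        rfl
  have hcardC : Fintype.card ↥C = n := by
    exact (Fintype.card_congr e.symm).trans (Fintype.card_fin n)
  rw [← Nat.card_coe_set_eq, ← Nat.card_congr (Equiv.ofBijective F hFbij),
    Nat.card_eq_fintype_card, Fintype.card_sum, Fintype.card_perm, hcardC]


theorem circ_count {n p : ℕ} (hn : 2 ≤ n) (b : ZMod 2) (t : Equiv.Perm (Fin n))
    (hkey : ∀ j i : Fin n,
      (if ((j - i).val < p) then (1 : ZMod 2) else 0) = b + if i = t j then 1 else 0) :
    {φ : (↥(circCode n p) → ZMod 2) →+* (↥(circCode n p) → ZMod 2) |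
      IsNeuralEndo (circCode n p) φ}.ncard = Nat.factorial n + n := by
  set C := circCode n p with hC
  let E : Fin n → ↥C := fun i => ⟨fun j => decide ((j - i).val < p), ⟨i, fun j => rfl⟩⟩
  have hxv : ∀ j i : Fin n, xvar C j (E i) = if ((j - i).val < p) then (1 : ZMod 2) else 0 := by
    intro j i
    simp [xvar, E]
  have hinj : Function.Injective E := by
    intro i i' hE
    have hfun : ∀ j : Fin n, (if ((j - i).val < p) then (1 : ZMod 2) else 0)
        = if ((j - i').val < p) then (1 : ZMod 2) else 0 := by
      intro j
      have := congrFun (congrArg Subtype.val hE) j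
      simp only [E, decide_eq_decide] at this
      exact if_congr this rfl rfl
    have h1 : ∀ j : Fin n, (if i = t j then (1:ZMod 2) else 0) = if i' = t j then 1 else 0 := by
      intro j
      have h2 := hfun j
      rw [hkey j i, hkey j i'] at h2
      exact add_left_cancel h2
    have h3 := h1 (t.symm i)
    rw [if_pos (by rw [Equiv.apply_symm_apply]), Equiv.apply_symm_apply] at h3
    by_contra hne
    rw [if_neg (fun h' => hne h'.symm)] at h3
    exact (by decide : (1:ZMod 2) ≠ 0) h3
  have hsurj : Function.Surjective E := by
    rintro ⟨c, hc⟩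
    obtain ⟨i, hi⟩ := hc
    exact ⟨i, Subtype.ext (funext fun j => (hi j).symm)⟩
  let e : Fin n ≃ ↥C := Equiv.ofBijective E ⟨hinj, hsurj⟩
  refine abstract_count hn C e b t ?_
  intro j i
  rw [show e i = E i from rfl, hxv, hkey]

end NeuralAux


/-- For the circulant code with support `p = 1` or `p = n - 1` on `n ≥ 2` neurons,
the number of neural ring endomorphisms is `n! + n`. -/
theorem count_neuralEndo_support_one_or_pred (n p : ℕ) (hn : 2 ≤ n)
    (hp : p = 1 ∨ p = n - 1) :
    {φ : (↥(circCode n p) → ZMod 2) →+* (↥(circCode n p) → ZMod 2) |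
      IsNeuralEndo (circCode n p) φ}.ncard = Nat.factorial n + n := by
  haveI : NeZero n := ⟨by omega⟩
  rcases hp with rfl | rfl
  · refine NeuralAux.circ_count hn 0 (Equiv.refl _) ?_
    intro j i
    have hiff : (j - i).val < 1 ↔ i = j := by
      rw [Nat.lt_one_iff]
      constructor
      · intro hv
        have h0 : j - i = 0 := Fin.ext (by simpa using hv)
        exact (sub_eq_zero.mp h0).symm
      · rintro rfl
        simp
    simp only [Equiv.refl_apply, zero_add]
    exact if_congr hiff rfl rfl
  · refine NeuralAux.circ_count hn 1 (Equiv.addRight 1) ?_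
    intro j i
    have hle : (j - i).val ≤ n - 1 := by
      have := (j - i).isLt; omega
    have h1v : ((1 : Fin n)).val = 1 := by
      rw [Fin.val_one', Nat.mod_eq_of_lt (by omega)]
    have hneg : ((-1 : Fin n)).val = n - 1 := by
      rw [Fin.coe_neg, h1v, Nat.mod_eq_of_lt (by omega)]
    have hiff : ¬ ((j - i).val < n - 1) ↔ i = j + 1 := by
      constructor
      · intro hlt
        have hv : (j - i).val = n - 1 := by omega
        have : j - i = -1 := Fin.ext (hv.trans hneg.symm)
        have hj : j = i + -1 := by rw [← this]; abel
        rw [hj]; abel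
      · intro hip
        have : j - i = -1 := by rw [hip]; abel
        rw [this, hneg]; omega
    by_cases hc : i = j + 1
    · rw [if_neg (by rw [← hiff] at hc; exact fun hl => hc hl),
        if_pos (by simpa [Equiv.addRight] using hc)]
      decide
    · rw [if_pos (by by_contra hnl; exact hc (hiff.mp hnl)),
        if_neg (by simpa [Equiv.addRight] using hc)]
      decide
end

section
/- Let C be the circulant code with support p on n neurons, 1 ≤ p < n. Then the number of basis permutation maps of R_C that are neural ring endomorphisms equals n! if p = 1 or p = n − 1, and equals 2n if 1 < p < n − 1. -/
/-- The characteristic function `ρ_c` of a codeword `c ∈ C` in the neural ring. -/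
def rho {n : ℕ} (C : Set (Fin n → Bool)) (c : ↥C) : ↥C → ZMod 2 :=
  fun d => if d = c then 1 else 0

/-- A ring endomorphism of the neural ring of `C` is a basis permutation map if it
permutes the characteristic functions `ρ_c`. -/
def IsBPM {n : ℕ} (C : Set (Fin n → Bool))
    (φ : (↥C → ZMod 2) →+* (↥C → ZMod 2)) : Prop :=
  ∃ π : Equiv.Perm ↥C, ∀ c : ↥C, φ (rho C c) = rho C (π c)


open Fin.NatCast Fin.CommRing

namespace CP

lemma mod2 {a n : ℕ} (hn : 0 < n) (h : a < 2*n) :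
    (a < n ∧ a % n = a) ∨ (n ≤ a ∧ a % n = a - n) := by
  rcases lt_or_ge a n with h1 | h1
  · exact Or.inl ⟨h1, Nat.mod_eq_of_lt h1⟩
  · exact Or.inr ⟨h1, by rw [Nat.mod_eq_sub_mod h1, Nat.mod_eq_of_lt (by omega)]⟩

variable {n p : ℕ} [NeZero n]

lemma vsub (a b : Fin n) : (a - b).val = (n - b.val + a.val) % n := by
  rw [Fin.sub_def]

lemma vadd (a b : Fin n) : (a + b).val = (a.val + b.val) % n := by
  rw [Fin.add_def]

lemma val1 (hn : 2 ≤ n) : (1 : Fin n).val = 1 := by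
  rw [Fin.val_one']; exact Nat.mod_eq_of_lt hn

lemma valcast (m : ℕ) (h : m < n) : ((m : ℕ) : Fin n).val = m := by
  rw [Fin.val_natCast]; exact Nat.mod_eq_of_lt h

lemma neg_one_val (hn : 2 ≤ n) : ((-1 : Fin n)).val = n - 1 := by
  have : (-1 : Fin n) = 0 - 1 := by ring
  rw [this, vsub, val1 hn, Fin.val_zero]
  simp [Nat.mod_eq_of_lt (show n - 1 < n by omega)]

lemma lt_pred_iff (hn : 2 ≤ n) (x : Fin n) : x.val < n - 1 ↔ x ≠ -1 := by
  constructor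
  · intro h he; rw [he, neg_one_val hn] at h; omega
  · intro h
    have := x.isLt
    rcases Nat.lt_or_ge x.val (n-1) with h1 | h1
    · exact h1
    · exact absurd (Fin.val_injective (by rw [neg_one_val hn]; omega)) h

lemma lt_one_iff (x : Fin n) : x.val < 1 ↔ x = 0 := by
  rw [Nat.lt_one_iff, Fin.ext_iff]; simp

-- the combinatorial predicate
def QQ (n p : ℕ) (τ : Equiv.Perm (Fin n)) : Prop :=
  ∀ j : Fin n, ∃ i : Fin n, ∀ k : Fin n, ((j - k).val < p ↔ (i - τ k).val < p)

lemma QQ_of_p1 (τ : Equiv.Perm (Fin n)) : QQ n 1 τ := by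
  intro j
  refine ⟨τ j, fun k => ?_⟩
  rw [lt_one_iff, lt_one_iff, sub_eq_zero, sub_eq_zero]
  exact ⟨fun h => by rw [h], fun h => τ.injective h⟩

lemma QQ_of_pn1 (hn : 2 ≤ n) (τ : Equiv.Perm (Fin n)) : QQ n (n-1) τ := by
  intro j
  refine ⟨τ (j+1) - 1, fun k => ?_⟩
  rw [lt_pred_iff hn, lt_pred_iff hn]
  have h1 : (j - k = -1) ↔ k = j + 1 := by
    constructor
    · intro h
      have : k = j - (j - k) := by ring
      rw [this, h]; ring
    · intro h; rw [h]; ring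
  have h2 : (τ (j+1) - 1 - τ k = -1) ↔ τ k = τ (j + 1) := by
    constructor
    · intro h
      have : τ k = τ (j+1) - 1 - (τ (j+1) - 1 - τ k) := by ring
      rw [this, h]; ring
    · intro h; rw [h]; ring
  rw [not_iff_not, h1, h2]
  exact ⟨fun h => by rw [h], fun h => τ.injective h⟩

-- rotations satisfy QQ
lemma QQ_rot (a : Fin n) : QQ n p (Equiv.addLeft a) := by
  intro j
  refine ⟨a + j, fun k => ?_⟩
  have : a + j - (Equiv.addLeft a k) = j - k := by
    rw [Equiv.coe_addLeft]; ring
  rw [this]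

lemma refl_iff (hp1 : 1 ≤ p) (hpn : p < n) (x : Fin n) :
    x.val < p ↔ (((p-1 : ℕ) : Fin n) - x).val < p := by
  have hx := x.isLt
  rw [vsub, valcast _ (by omega)]
  rcases mod2 (n := n) (by omega) (a := n - x.val + (p-1)) (by omega) with ⟨h1, h2⟩ | ⟨h1, h2⟩ <;>
    rw [h2] <;> omega

lemma QQ_refl (hp1 : 1 ≤ p) (hpn : p < n) (a : Fin n) : QQ n p (Equiv.subLeft a) := by
  intro j
  refine ⟨a - j + ((p-1 : ℕ) : Fin n), fun k => ?_⟩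
  have : a - j + ((p-1 : ℕ) : Fin n) - (Equiv.subLeft a k) = ((p-1 : ℕ) : Fin n) - (j - k) := by
    rw [Equiv.subLeft_apply]; ring
  rw [this]
  exact refl_iff hp1 hpn (j - k)

end CP

namespace CP2
open CP
variable {n p : ℕ} [NeZero n]

lemma NAT {n p σ y : ℕ} (h2p : 2 ≤ p) (hpn : p + 2 ≤ n) (hσ : σ < n) (hy : y < p)
    (hb : p ≤ (y + σ) % n)
    (hg : ∀ v, v < p → v ≠ y → (v + σ) % n < p) : σ = 1 ∨ σ = n - 1 := by
  have hb' : p ≤ y + σ ∧ y + σ < n := by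
    rcases mod2 (n := n) (by omega) (a := y + σ) (by omega) with ⟨h1, h2⟩ | ⟨h1, h2⟩ <;> omega
  by_cases hy0 : y = 0
  · have h1 := hg 1 (by omega) (by omega)
    rcases mod2 (n := n) (by omega) (a := 1 + σ) (by omega) with ⟨ha, hc⟩ | ⟨ha, hc⟩ <;> omega
  · have h1 := hg (y-1) (by omega) (by omega)
    have hyp : y + σ = p := by
      rcases mod2 (n := n) (by omega) (a := y - 1 + σ) (by omega) with ⟨ha, hc⟩ | ⟨ha, hc⟩ <;> omega
    by_cases hyy : y + 1 = p
    · omega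
    · have h2 := hg (y+1) (by omega) (by omega)
      rcases mod2 (n := n) (by omega) (a := y + 1 + σ) (by omega) with ⟨ha, hc⟩ | ⟨ha, hc⟩ <;> omega

lemma step (h2p : 2 ≤ p) (hpn2 : p + 2 ≤ n) (τ : Equiv.Perm (Fin n))
    (w : Fin n → Fin n)
    (hw : ∀ j k, ((j - k).val < p ↔ (w j - τ k).val < p)) (j : Fin n) :
    w (j+1) = w j + 1 ∨ w (j+1) = w j - 1 := by
  have hn : 4 ≤ n := by omega
  set s : Fin n := w (j+1) - w j with hs
  set g : Fin n → Fin n := fun c => w j - τ (j + 1 - c) with hg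
  have ginj : Function.Injective g := by
    intro c c' h
    have h1 : τ (j+1-c) = τ (j+1-c') := sub_right_injective h
    have h2 := τ.injective h1
    have h3 : c = (j + 1) - ((j+1) - c) := by ring
    rw [h3, h2]; ring
  have g_shift : ∀ c : Fin n, (w (j+1) - τ (j + 1 - c)).val = ((g c).val + s.val) % n := by
    intro c
    have h1 : w (j+1) - τ (j+1-c) = g c + s := by rw [hg, hs]; ring
    rw [h1, vadd]
  have jk1 : ∀ c : Fin n, j - (j + 1 - c) = c - 1 := fun c => by ring
  have jk2 : ∀ c : Fin n, (j+1) - (j + 1 - c) = c := fun c => by ring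
  have g_lt : ∀ c : Fin n, 1 ≤ c.val → c.val ≤ p → (g c).val < p := by
    intro c h1 h2
    refine (hw j (j+1-c)).mp ?_
    rw [jk1, vsub, val1 (by omega)]
    have := c.isLt
    rcases mod2 (n := n) (by omega) (a := n - 1 + c.val) (by omega) with ⟨ha, hc⟩ | ⟨ha, hc⟩ <;> omega
  have good : ∀ c : Fin n, c.val < p → ((g c).val + s.val) % n < p := by
    intro c hc
    rw [← g_shift]
    refine (hw (j+1) (j+1-c)).mp ?_
    rw [jk2]; exact hc
  set c0 : Fin n := ((p : ℕ) : Fin n) with hc0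
  have hc0v : c0.val = p := valcast p (by omega)
  have hy : (g c0).val < p := g_lt c0 (by omega) (by omega)
  have hbad : p ≤ ((g c0).val + s.val) % n := by
    by_contra hcon
    push_neg at hcon
    rw [← g_shift] at hcon
    have := (hw (j+1) (j+1-c0)).mpr hcon
    rw [jk2, hc0v] at this
    omega
  -- pigeonhole: surjectivity of g onto [0,p)
  have hGdef : ∀ t : Fin p, (g ((t.val+1 : ℕ) : Fin n)).val < p := by
    intro t
    have ht := t.isLt
    have hv : ((t.val+1 : ℕ) : Fin n).val = t.val + 1 := valcast _ (by omega)
    exact g_lt _ (by omega) (by omega)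
  set G : Fin p → Fin p := fun t => ⟨(g ((t.val+1 : ℕ) : Fin n)).val, hGdef t⟩ with hG
  have Ginj : Function.Injective G := by
    intro t t' h
    rw [hG] at h
    simp only [Fin.mk.injEq] at h
    have h2 := ginj (Fin.val_injective h)
    have h3 := congrArg Fin.val h2
    rw [valcast _ (by have := t.isLt; omega), valcast _ (by have := t'.isLt; omega)] at h3
    exact Fin.val_injective (by omega)
  have Gsurj : Function.Surjective G := Finite.injective_iff_surjective.mp Ginj
  have hgood_all : ∀ v, v < p → v ≠ (g c0).val → (v + s.val) % n < p := by
    intro v hv hne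
    obtain ⟨t, ht⟩ := Gsurj ⟨v, hv⟩
    have hval : (g ((t.val+1 : ℕ) : Fin n)).val = v := congrArg Fin.val ht
    by_cases hc : t.val + 1 = p
    · exact absurd (by rw [← hval, hc]) hne
    · have hlt : ((t.val+1 : ℕ) : Fin n).val < p := by
        rw [valcast _ (by have := t.isLt; omega)]
        have := t.isLt; omega
      have := good _ hlt
      rwa [hval] at this
  rcases NAT h2p hpn2 s.isLt hy hbad hgood_all with h | h
  · left
    have hs1 : s = 1 := Fin.val_injective (by rw [h, val1 (by omega)])
    have hww : w (j+1) = w j + s := by rw [hs]; ring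
    rw [hww, hs1]
  · right
    have hs1 : s = -1 := Fin.val_injective (by rw [h, neg_one_val (by omega)])
    have : w (j+1) = w j + s := by rw [hs]; ring
    rw [this, hs1]; ring

lemma tau_plus (h2p : 2 ≤ p) (hpn2 : p + 2 ≤ n) (τ : Equiv.Perm (Fin n))
    (w : Fin n → Fin n)
    (hw : ∀ j k, ((j - k).val < p ↔ (w j - τ k).val < p)) (j : Fin n)
    (h1 : w (j+1) = w j + 1) : τ (j + 1) = w (j + 1) := by
  have hd : (w (j+1) - τ (j+1)).val < p := by
    refine (hw (j+1) (j+1)).mp ?_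
    simp [sub_self]; omega
  have hge : ¬ (w j - τ (j+1)).val < p := by
    intro h
    have h2 := (hw j (j+1)).mpr h
    have h3 : j - (j + 1) = -1 := by ring
    rw [h3, neg_one_val (by omega)] at h2
    omega
  have hrel : w j - τ (j+1) = (w (j+1) - τ (j+1)) - 1 := by rw [h1]; ring
  rw [hrel, vsub, val1 (by omega)] at hge
  set d := (w (j+1) - τ (j+1)).val with hdd
  have hdn : d < n := (w (j+1) - τ (j+1)).isLt
  have hd0 : d = 0 := by
    rcases mod2 (n := n) (by omega) (a := n - 1 + d) (by omega) with ⟨ha, hc⟩ | ⟨ha, hc⟩ <;> omega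
  have : w (j+1) - τ (j+1) = 0 := Fin.val_injective (by rw [← hdd, hd0]; rfl)
  exact (sub_eq_zero.mp this).symm

lemma tau_minus (h2p : 2 ≤ p) (hpn2 : p + 2 ≤ n) (τ : Equiv.Perm (Fin n))
    (w : Fin n → Fin n)
    (hw : ∀ j k, ((j - k).val < p ↔ (w j - τ k).val < p)) (j : Fin n)
    (h1 : w (j+1) = w j - 1) : τ (j + 1) = w (j + 1) - ((p-1 : ℕ) : Fin n) := by
  have hd : (w (j+1) - τ (j+1)).val < p := by
    refine (hw (j+1) (j+1)).mp ?_
    simp [sub_self]; omega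
  have hge : ¬ (w j - τ (j+1)).val < p := by
    intro h
    have h2 := (hw j (j+1)).mpr h
    have h3 : j - (j + 1) = -1 := by ring
    rw [h3, neg_one_val (by omega)] at h2
    omega
  have hrel : w j - τ (j+1) = (w (j+1) - τ (j+1)) + 1 := by
    have : w j = w (j+1) + 1 := by rw [h1]; ring
    rw [this]; ring
  rw [hrel, vadd, val1 (by omega)] at hge
  set d := (w (j+1) - τ (j+1)).val with hdd
  have hdn : d < n := (w (j+1) - τ (j+1)).isLt
  have hdp : d = p - 1 := by
    rcases mod2 (n := n) (by omega) (a := d + 1) (by omega) with ⟨ha, hc⟩ | ⟨ha, hc⟩ <;> omega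
  have heq : w (j+1) - τ (j+1) = ((p-1 : ℕ) : Fin n) := by
    apply Fin.val_injective
    rw [← hdd, hdp, valcast _ (by omega)]
  have : τ (j+1) = w (j+1) - (w (j+1) - τ (j+1)) := by ring
  rw [this, heq]

lemma hard (h2p : 2 ≤ p) (hpn2 : p + 2 ≤ n) (τ : Equiv.Perm (Fin n))
    (w : Fin n → Fin n)
    (hw : ∀ j k, ((j - k).val < p ↔ (w j - τ k).val < p)) :
    (∃ a, ∀ k, τ k = a + k) ∨ (∃ a, ∀ k, τ k = a - k) := by
  have hn : 4 ≤ n := by omega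
  have hstep := step h2p hpn2 τ w hw
  have key2 : ∀ j : Fin n, w (j+1+1) ≠ w j := by
    intro j he
    have h : ∀ k, ((j - k).val < p ↔ (w (j+1+1) - τ k).val < p) := by
      intro k; rw [he]; exact hw j k
    have h2 := (h (j+1+1)).mpr ((hw (j+1+1) (j+1+1)).mp (by rw [sub_self, Fin.val_zero]; omega))
    have h3 : j - (j+1+1) = (-1 : Fin n) - 1 := by ring
    rw [h3, vsub, val1 (by omega), neg_one_val (by omega)] at h2
    rcases mod2 (n := n) (by omega) (a := n - 1 + (n-1)) (by omega) with ⟨ha, hc⟩ | ⟨ha, hc⟩ <;> omega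
  have one_ne : (1 : Fin n) ≠ -1 := by
    intro h
    have := congrArg Fin.val h
    rw [val1 (by omega), neg_one_val (by omega)] at this
    omega
  rcases hstep 0 with h0 | h0
  · -- rotation case
    have hall : ∀ j : Fin n, w (j+1) = w j + 1 := by
      have hm : ∀ m : ℕ, w ((m : Fin n) + 1) = w (m : Fin n) + 1 := by
        intro m
        induction m with
        | zero => simpa using h0
        | succ m ih =>
          have hcast : ((m+1 : ℕ) : Fin n) = (m : Fin n) + 1 := by push_cast; ring
          rw [hcast]
          rcases hstep ((m : Fin n) + 1) with h2 | h2
          · exact h2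
          · exfalso
            apply key2 (m : Fin n)
            rw [h2, ih]; ring
      intro j
      have := hm j.val
      rwa [Fin.cast_val_eq_self] at this
    have hwf : ∀ j : Fin n, w j = w 0 + j := by
      have hm : ∀ m : ℕ, w ((m : Fin n)) = w 0 + (m : Fin n) := by
        intro m
        induction m with
        | zero => simp
        | succ m ih =>
          have hcast : ((m+1 : ℕ) : Fin n) = (m : Fin n) + 1 := by push_cast; ring
          rw [hcast, hall, ih]; ring
      intro j
      have := hm j.val
      rwa [Fin.cast_val_eq_self] at this
    refine Or.inl ⟨w 0, fun k => ?_⟩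
    have hk : k - 1 + 1 = k := by ring
    have h6 := tau_plus h2p hpn2 τ w hw (k - 1) (hall (k-1))
    rw [hk] at h6
    rw [h6, hwf k]
  · -- reflection case
    have hall : ∀ j : Fin n, w (j+1) = w j - 1 := by
      have hm : ∀ m : ℕ, w ((m : Fin n) + 1) = w (m : Fin n) - 1 := by
        intro m
        induction m with
        | zero => simpa using h0
        | succ m ih =>
          have hcast : ((m+1 : ℕ) : Fin n) = (m : Fin n) + 1 := by push_cast; ring
          rw [hcast]
          rcases hstep ((m : Fin n) + 1) with h2 | h2
          · exfalso
            apply key2 (m : Fin n)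
            rw [h2, ih]; ring
          · exact h2
      intro j
      have := hm j.val
      rwa [Fin.cast_val_eq_self] at this
    have hwf : ∀ j : Fin n, w j = w 0 - j := by
      have hm : ∀ m : ℕ, w ((m : Fin n)) = w 0 - (m : Fin n) := by
        intro m
        induction m with
        | zero => simp
        | succ m ih =>
          have hcast : ((m+1 : ℕ) : Fin n) = (m : Fin n) + 1 := by push_cast; ring
          rw [hcast, hall, ih]; ring
      intro j
      have := hm j.val
      rwa [Fin.cast_val_eq_self] at this
    refine Or.inr ⟨w 0 - ((p-1 : ℕ) : Fin n), fun k => ?_⟩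
    have hk : k - 1 + 1 = k := by ring
    have h6 := tau_minus h2p hpn2 τ w hw (k - 1) (hall (k-1))
    rw [hk] at h6
    rw [h6, hwf k]; ring

lemma QQ_iff_case2 (h2p : 2 ≤ p) (hpn2 : p + 2 ≤ n) (τ : Equiv.Perm (Fin n)) :
    QQ n p τ ↔ (∃ a, ∀ k, τ k = a + k) ∨ (∃ a, ∀ k, τ k = a - k) := by
  constructor
  · intro hQ
    choose w hw using hQ
    exact hard h2p hpn2 τ w hw
  · rintro (⟨a, ha⟩ | ⟨a, ha⟩)
    · have : τ = Equiv.addLeft a := Equiv.ext fun k => by rw [ha k]; rfl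
      rw [this]; exact QQ_rot a
    · have : τ = Equiv.subLeft a := Equiv.ext fun k => by rw [ha k]; rfl
      rw [this]
      exact QQ_refl (p := p) (by omega) (by omega) a

lemma card_case2 (h2p : 2 ≤ p) (hpn2 : p + 2 ≤ n) :
    {τ : Equiv.Perm (Fin n) | QQ n p τ}.ncard = 2 * n := by
  have hn : 4 ≤ n := by omega
  set F : Fin n ⊕ Fin n → Equiv.Perm (Fin n) :=
    Sum.elim (fun a => Equiv.addLeft a) (fun a => Equiv.subLeft a) with hF
  have hset : {τ : Equiv.Perm (Fin n) | QQ n p τ} = Set.range F := by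
    ext τ
    simp only [Set.mem_setOf_eq, Set.mem_range]
    rw [QQ_iff_case2 h2p hpn2]
    constructor
    · rintro (⟨a, ha⟩ | ⟨a, ha⟩)
      · exact ⟨.inl a, (Equiv.ext fun k => (ha k).symm)⟩
      · exact ⟨.inr a, (Equiv.ext fun k => (ha k).symm)⟩
    · rintro ⟨(a | a), rfl⟩
      · exact Or.inl ⟨a, fun k => rfl⟩
      · exact Or.inr ⟨a, fun k => rfl⟩
  have hinj : Function.Injective F := by
    rintro (a | a) (b | b) h
    · have := DFunLike.congr_fun h (0 : Fin n)
      simp only [hF, Sum.elim_inl, Equiv.coe_addLeft] at this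
      rw [add_zero, add_zero] at this
      rw [this]
    · exfalso
      have h0 := DFunLike.congr_fun h (0 : Fin n)
      have h1 := DFunLike.congr_fun h (1 : Fin n)
      simp only [hF, Sum.elim_inl, Sum.elim_inr, Equiv.coe_addLeft,
        Equiv.subLeft_apply] at h0 h1
      rw [add_zero, sub_zero] at h0
      rw [← h0] at h1
      have h2 : (1 : Fin n) = -1 := by
        have : a + 1 - (a - 1) = (1 : Fin n) + 1 := by ring
        have h3 : (1 : Fin n) + 1 = 0 := by rw [← this, h1]; ring
        exact eq_neg_of_add_eq_zero_left h3
      have := congrArg Fin.val h2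
      rw [val1 (by omega), neg_one_val (by omega)] at this
      omega
    · exfalso
      have h0 := DFunLike.congr_fun h (0 : Fin n)
      have h1 := DFunLike.congr_fun h (1 : Fin n)
      simp only [hF, Sum.elim_inl, Sum.elim_inr, Equiv.coe_addLeft,
        Equiv.subLeft_apply] at h0 h1
      rw [add_zero, sub_zero] at h0
      rw [h0] at h1
      have h2 : (1 : Fin n) = -1 := by
        have h3 : (1 : Fin n) + 1 = 0 := by
          have : b + 1 - (b - 1) = (1 : Fin n) + 1 := by ring
          rw [← this, ← h1]; ring
        exact eq_neg_of_add_eq_zero_left h3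
      have := congrArg Fin.val h2
      rw [val1 (by omega), neg_one_val (by omega)] at this
      omega
    · have := DFunLike.congr_fun h (0 : Fin n)
      simp only [hF, Sum.elim_inr, Equiv.subLeft_apply] at this
      rw [sub_zero, sub_zero] at this
      rw [this]
  rw [hset, ← Set.image_univ, Set.ncard_image_of_injective _ hinj, Set.ncard_univ]
  simp [Nat.card_sum]
  omega

lemma card_case1 (hn2 : 2 ≤ n) (hQall : ∀ τ : Equiv.Perm (Fin n), QQ n p τ) :
    {τ : Equiv.Perm (Fin n) | QQ n p τ}.ncard = Nat.factorial n := by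
  have : {τ : Equiv.Perm (Fin n) | QQ n p τ} = Set.univ := by
    ext τ; simp [hQall τ]
  rw [this, Set.ncard_univ, Nat.card_eq_fintype_card, Fintype.card_perm, Fintype.card_fin]

end CP2

namespace CPR

lemma ite_bridge (a b : Prop) [Decidable a] [Decidable b] :
    ((if a then (1 : ZMod 2) else 0) = (if b then 1 else 0)) ↔ (a ↔ b) := by
  by_cases ha : a <;> by_cases hb : b <;> simp [ha, hb]

variable {n p : ℕ}

def ee (n p : ℕ) (i : Fin n) : Fin n → Bool := fun j => decide ((j - i).val < p)

def E (n p : ℕ) (i : Fin n) : ↥(circCode n p) := ⟨ee n p i, i, fun j => rfl⟩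

-- reuse arithmetic helpers
lemma vsub [NeZero n] (a b : Fin n) : (a - b).val = (n - b.val + a.val) % n := by
  rw [Fin.sub_def]

lemma val1 [NeZero n] (hn : 2 ≤ n) : (1 : Fin n).val = 1 := by
  rw [Fin.val_one']; exact Nat.mod_eq_of_lt hn

lemma neg_one_val [NeZero n] (hn : 2 ≤ n) : ((-1 : Fin n)).val = n - 1 := by
  have h : (-1 : Fin n) = 0 - 1 := by ring
  rw [h, vsub, val1 hn, Fin.val_zero]
  simp [Nat.mod_eq_of_lt (show n - 1 < n by omega)]

lemma E_inj [NeZero n] (hp1 : 1 ≤ p) (hpn : p < n) : Function.Injective (E n p) := by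
  intro i i' h
  have hfun : ee n p i = ee n p i' := congrArg Subtype.val h
  have h1 : (i' - i).val < p := by
    have h2 := congrFun hfun i'
    simp only [ee] at h2
    rw [decide_eq_decide] at h2
    rw [h2, sub_self, Fin.val_zero]; omega
  by_cases hd : (i' - i).val = 0
  · have : i' - i = 0 := Fin.val_injective hd
    exact (sub_eq_zero.mp this).symm
  · exfalso
    have h2 := congrFun hfun (i' - 1)
    simp only [ee] at h2
    rw [decide_eq_decide] at h2
    have h3 : i' - 1 - i = (i' - i) - 1 := by ring
    have h4 : i' - 1 - i' = -1 := by ring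
    rw [h3, h4, neg_one_val (by omega)] at h2
    have h5 : ((i' - i) - 1).val = (i' - i).val - 1 := by
      rw [vsub, val1 (by omega)]
      have := (i' - i).isLt
      rw [show n - 1 + (i' - i).val = (i' - i).val - 1 + n by omega, Nat.add_mod_right,
        Nat.mod_eq_of_lt (by omega)]
    rw [h5] at h2
    have := h2.mp (by omega)
    omega

lemma E_surj : Function.Surjective (E n p) := by
  rintro ⟨c, i, hc⟩
  exact ⟨i, Subtype.ext (funext fun j => (hc j).symm)⟩

noncomputable def Eqv (n p : ℕ) [NeZero n] (hp1 : 1 ≤ p) (hpn : p < n) :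
    Fin n ≃ ↥(circCode n p) :=
  Equiv.ofBijective (E n p) ⟨E_inj hp1 hpn, E_surj⟩

@[simp] lemma Eqv_apply [NeZero n] (hp1 : 1 ≤ p) (hpn : p < n) (i : Fin n) :
    Eqv n p hp1 hpn i = E n p i := rfl

def Phi {n : ℕ} (C : Set (Fin n → Bool)) (π : Equiv.Perm ↥C) :
    (↥C → ZMod 2) →+* (↥C → ZMod 2) :=
  Pi.ringHom (fun c => (Pi.evalRingHom (fun _ => ZMod 2) (π.symm c)))

lemma Phi_apply {C : Set (Fin n → Bool)} (π : Equiv.Perm ↥C) (f : ↥C → ZMod 2) (c : ↥C) :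
    Phi C π f c = f (π.symm c) := rfl

lemma Phi_rho {C : Set (Fin n → Bool)} (π : Equiv.Perm ↥C) (c : ↥C) :
    Phi C π (rho C c) = rho C (π c) := by
  funext d
  rw [Phi_apply]
  simp [rho, Equiv.symm_apply_eq]

lemma Phi_inj {C : Set (Fin n → Bool)} : Function.Injective (Phi C) := by
  intro π π' h
  apply Equiv.ext
  intro c
  have h1 : rho C (π c) = rho C (π' c) := by rw [← Phi_rho, ← Phi_rho, h]
  have h2 := congrFun h1 (π c)
  simp only [rho, if_pos rfl] at h2
  by_contra hne
  rw [if_neg hne] at h2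
  exact one_ne_zero h2

lemma sum_rho {C : Set (Fin n → Bool)} [Fintype ↥C] (f : ↥C → ZMod 2) :
    (∑ c ∈ Finset.univ.filter (fun c => f c = 1), rho C c) = f := by
  classical
  funext d
  rw [Finset.sum_apply]
  simp only [rho]
  rw [Finset.sum_ite_eq]
  simp only [Finset.mem_filter, Finset.mem_univ, true_and]
  rcases (by decide : ∀ x : ZMod 2, x = 0 ∨ x = 1) (f d) with h | h <;> simp [h]

lemma hom_eq_of_rho {C : Set (Fin n → Bool)} [Fintype ↥C]
    (φ ψ : (↥C → ZMod 2) →+* (↥C → ZMod 2))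
    (h : ∀ c, φ (rho C c) = ψ (rho C c)) : φ = ψ := by
  classical
  apply RingHom.ext
  intro f
  rw [← sum_rho f, map_sum, map_sum]
  exact Finset.sum_congr rfl (fun c _ => h c)

end CPR

namespace CPR

lemma xvar_E (j k : Fin n) :
    xvar (circCode n p) j (E n p k) = if ((j - k).val < p) then 1 else 0 := by
  simp only [xvar, E, ee, decide_eq_true_eq]

lemma Eqv_symm_E [NeZero n] (hp1 : 1 ≤ p) (hpn : p < n) (k : Fin n) :
    (Eqv n p hp1 hpn).symm (E n p k) = k := by
  rw [← Eqv_apply hp1 hpn, Equiv.symm_apply_apply]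

lemma permCongr_symm_E [NeZero n] (hp1 : 1 ≤ p) (hpn : p < n)
    (τ : Equiv.Perm (Fin n)) (k : Fin n) :
    ((Eqv n p hp1 hpn).permCongr τ).symm (E n p (τ k)) = E n p k := by
  rw [Equiv.symm_apply_eq, Equiv.permCongr_apply, Eqv_symm_E hp1 hpn]
  exact (Eqv_apply hp1 hpn (τ k)).symm

lemma neural_iff [NeZero n] (hp1 : 1 ≤ p) (hpn : p < n) (τ : Equiv.Perm (Fin n)) :
    IsNeuralEndo (circCode n p) (Phi (circCode n p) ((Eqv n p hp1 hpn).permCongr τ)) ↔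
      CP.QQ n p τ := by
  have hn2 : 2 ≤ n := by omega
  set π := (Eqv n p hp1 hpn).permCongr τ with hπ
  constructor
  · intro hN j
    rcases hN j with h0 | h1 | ⟨i, hi⟩
    · exfalso
      have h2 := congrFun h0 (π (E n p j))
      rw [Phi_apply, Equiv.symm_apply_apply] at h2
      rw [xvar_E] at h2
      rw [if_pos (by rw [sub_self, Fin.val_zero]; omega)] at h2
      simp at h2
    · exfalso
      have h2 := congrFun h1 (π (E n p (j+1)))
      rw [Phi_apply, Equiv.symm_apply_apply] at h2
      rw [xvar_E] at h2
      have h3 : j - (j+1) = -1 := by ring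
      rw [if_neg (by rw [h3, neg_one_val hn2]; omega)] at h2
      simp at h2
    · refine ⟨i, fun k => ?_⟩
      have h2 := congrFun hi (E n p (τ k))
      rw [Phi_apply, hπ, permCongr_symm_E hp1 hpn, xvar_E] at h2
      rw [show xvar (circCode n p) i (E n p (τ k)) = if ((i - τ k).val < p) then 1 else 0
        from xvar_E i (τ k)] at h2
      exact (ite_bridge _ _).mp h2
  · intro hQ j
    obtain ⟨i, hi⟩ := hQ j
    refine Or.inr (Or.inr ⟨i, funext fun c => ?_⟩)
    obtain ⟨k0, rfl⟩ := (Eqv n p hp1 hpn).surjective c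
    set k := τ.symm k0 with hk
    have hc : Eqv n p hp1 hpn k0 = E n p (τ k) := by rw [hk]; simp
    rw [hc, Phi_apply, hπ, permCongr_symm_E hp1 hpn, xvar_E]
    rw [show xvar (circCode n p) i (E n p (τ k)) = if ((i - τ k).val < p) then 1 else 0
      from xvar_E i (τ k)]
    exact (ite_bridge _ _).mpr (hi k)

lemma set_eq [NeZero n] (hp1 : 1 ≤ p) (hpn : p < n) :
    {φ : (↥(circCode n p) → ZMod 2) →+* (↥(circCode n p) → ZMod 2) |
        IsBPM (circCode n p) φ ∧ IsNeuralEndo (circCode n p) φ} =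
      (fun τ : Equiv.Perm (Fin n) => Phi (circCode n p) ((Eqv n p hp1 hpn).permCongr τ)) ''
        {τ | CP.QQ n p τ} := by
  letI : Fintype ↥(circCode n p) := Fintype.ofFinite _
  ext φ
  simp only [Set.mem_setOf_eq, Set.mem_image]
  constructor
  · rintro ⟨⟨π, hπ⟩, hN⟩
    have hφ : φ = Phi (circCode n p) π :=
      hom_eq_of_rho _ _ (fun c => by rw [hπ c, Phi_rho])
    set τ := (Equiv.permCongr (Eqv n p hp1 hpn)).symm π with hτ
    have hπτ : (Eqv n p hp1 hpn).permCongr τ = π := by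
      rw [hτ]; exact (Equiv.permCongr (Eqv n p hp1 hpn)).apply_symm_apply π
    refine ⟨τ, ?_, ?_⟩
    · show CP.QQ n p τ
      rw [← neural_iff hp1 hpn, hπτ, ← hφ]; exact hN
    · rw [hπτ, ← hφ]
  · rintro ⟨τ, hτ, rfl⟩
    exact ⟨⟨(Eqv n p hp1 hpn).permCongr τ, fun c => Phi_rho _ c⟩,
      (neural_iff hp1 hpn τ).mpr hτ⟩

end CPR

/-- For the circulant code with support `p` on `n` neurons, the number of basis
permutation maps that are neural ring endomorphisms is `n!` when `p = 1` or
`p = n - 1`, and `2n` when `1 < p < n - 1`. -/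
theorem count_bpm_neuralEndo (n p : ℕ) (hp1 : 1 ≤ p) (hpn : p < n) :
    ((p = 1 ∨ p = n - 1) →
      {φ : (↥(circCode n p) → ZMod 2) →+* (↥(circCode n p) → ZMod 2) |
        IsBPM (circCode n p) φ ∧ IsNeuralEndo (circCode n p) φ}.ncard =
        Nat.factorial n) ∧
    (1 < p → p < n - 1 →
      {φ : (↥(circCode n p) → ZMod 2) →+* (↥(circCode n p) → ZMod 2) |
        IsBPM (circCode n p) φ ∧ IsNeuralEndo (circCode n p) φ}.ncard = 2 * n) := by
  haveI : NeZero n := ⟨by omega⟩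
  have hset := CPR.set_eq (n := n) (p := p) hp1 hpn
  have hinj : Function.Injective
      (fun τ : Equiv.Perm (Fin n) =>
        CPR.Phi (circCode n p) ((CPR.Eqv n p hp1 hpn).permCongr τ)) :=
    fun a b h => (Equiv.injective _) (CPR.Phi_inj h)
  constructor
  · intro hcase
    rw [hset, Set.ncard_image_of_injective _ hinj]
    apply CP2.card_case1 (by omega)
    intro τ
    rcases hcase with h | h
    · rw [h]; exact CP.QQ_of_p1 τ
    · rw [h]; exact CP.QQ_of_pn1 (by omega) τ
  · intro h1 h2
    rw [hset, Set.ncard_image_of_injective _ hinj]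
    exact CP2.card_case2 (by omega) (by omega)
end

section
/- Let n > 1 be odd and let C be the circulant code with support p = 2 on n neurons. Then the number of neural ring endomorphisms of the neural ring R_C is exactly 3n. -/
namespace NeuralAux

open Fin.CommRing

abbrev Am {n : ℕ} [NeZero n] (j i : Fin n) : Prop := i = j ∨ i = j - 1

def Hcond {n : ℕ} [NeZero n] (f : Fin n → Fin n) : Prop :=
  ∀ j, (∀ i, ¬ Am j (f i)) ∨ (∀ i, Am j (f i)) ∨ ∃ k, ∀ i, (Am j (f i) ↔ Am k i)

instance {n : ℕ} [NeZero n] (f : Fin n → Fin n) : Decidable (Hcond f) := by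
  unfold Hcond; infer_instance

def fam {n : ℕ} [NeZero n] (p : Fin 3 × Fin n) : Fin n → Fin n :=
  match p.1 with
  | 0 => fun _ => p.2
  | 1 => fun i => i + p.2
  | 2 => fun i => p.2 - i

section basic
variable {n : ℕ} [NeZero n]

lemma val_one (h3 : 3 ≤ n) : (1 : Fin n).val = 1 := by
  rw [Fin.val_one' n]; exact Nat.mod_eq_of_lt (by omega)

lemma one_ne_zero' (h3 : 3 ≤ n) : (1 : Fin n) ≠ 0 := by
  intro hh
  have := congrArg Fin.val hh
  rw [val_one h3, Fin.val_zero] at this; omega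

lemma two_ne_zero' (h3 : 3 ≤ n) : (1 : Fin n) + 1 ≠ 0 := by
  intro hh
  have := congrArg Fin.val hh
  rw [Fin.val_add, val_one h3, Fin.val_zero, Nat.mod_eq_of_lt (by omega)] at this
  omega

lemma three_ne_zero' (h4 : 4 ≤ n) : (1 : Fin n) + 1 + 1 ≠ 0 := by
  have v1 : (1 : Fin n).val = 1 := val_one (by omega)
  have v2 : ((1 : Fin n) + 1).val = 2 := by
    rw [Fin.val_add, v1]; exact Nat.mod_eq_of_lt (by omega)
  have v3 : ((1 : Fin n) + 1 + 1).val = 3 := by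
    rw [Fin.val_add, v2, v1]; exact Nat.mod_eq_of_lt (by omega)
  intro hh
  have := congrArg Fin.val hh
  rw [v3, Fin.val_zero] at this
  omega

lemma lt_two_iff (h3 : 3 ≤ n) (a : Fin n) : a.val < 2 ↔ a = 0 ∨ a = 1 := by
  constructor
  · intro h
    interval_cases hv : a.val
    · left; exact Fin.ext (by simpa using hv)
    · right; exact Fin.ext (by rw [val_one h3]; simpa using hv)
  · rintro (rfl | rfl)
    · simp
    · rw [val_one h3]; omega

def w (i : Fin n) : Fin n → Bool := fun j => decide ((j - i).val < 2)

lemma w_iff (h3 : 3 ≤ n) {i j : Fin n} : w i j = true ↔ Am j i := by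
  rw [w, decide_eq_true_iff, lt_two_iff h3]
  constructor
  · rintro (h | h)
    · left; exact (sub_eq_zero.mp h).symm
    · right; rw [eq_sub_iff_add_eq]
      rw [sub_eq_iff_eq_add] at h
      rw [h]; exact add_comm i 1
  · rintro (rfl | rfl)
    · left; exact sub_self i
    · right; rw [sub_eq_iff_eq_add]; abel

lemma w_mem (i : Fin n) : w i ∈ circCode n 2 := ⟨i, fun _ => rfl⟩

lemma mem_circ {c : Fin n → Bool} (hc : c ∈ circCode n 2) : ∃ i, c = w i := by
  obtain ⟨i, hi⟩ := hc
  exact ⟨i, funext fun j => hi j⟩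

lemma w_inj (h3 : 3 ≤ n) : Function.Injective (w (n := n)) := by
  intro a b hab
  have h1 : w b a = true := by rw [← hab, w_iff h3]; left; rfl
  rw [w_iff h3] at h1
  rcases h1 with h1 | h1
  · exact h1.symm
  · have h2 : w a b = true := by rw [hab, w_iff h3]; left; rfl
    rw [w_iff h3] at h2
    rcases h2 with h2 | h2
    · exact h2
    · exfalso
      rw [h2] at h1
      have : (1:Fin n) + 1 = 0 := by
        have := sub_eq_iff_eq_add.mp (sub_sub b 1 1 ▸ h1.symm : b - (1+1) = b)
        nth_rewrite 1 [← add_zero b] at this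
        exact (add_left_cancel this).symm
      exact two_ne_zero' h3 this

noncomputable def ee (h3 : 3 ≤ n) : Fin n ≃ ↥(circCode n 2) :=
  Equiv.ofBijective (fun i => ⟨w i, w_mem i⟩)
    ⟨fun a b hab => w_inj h3 (congrArg Subtype.val hab),
     fun c => by obtain ⟨i, hi⟩ := mem_circ c.2; exact ⟨i, Subtype.ext hi.symm⟩⟩

lemma ee_coe (h3 : 3 ≤ n) (i : Fin n) :
    ((ee h3 i : ↥(circCode n 2)) : Fin n → Bool) = w i := rfl

lemma zmod2_cases_s15 (r : ZMod 2) : r = 0 ∨ r = 1 := by revert r; decide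

lemma xvar_e (h3 : 3 ≤ n) (j i : Fin n) :
    xvar (circCode n 2) j (ee h3 i) = if Am j i then 1 else 0 := by
  rw [xvar, ee_coe h3]
  by_cases h : Am j i
  · rw [if_pos ((w_iff h3).mpr h), if_pos h]
  · rw [if_neg (fun hw => h ((w_iff h3).mp hw)), if_neg h]

noncomputable def Phi (h3 : 3 ≤ n) (f : Fin n → Fin n) :
    (↥(circCode n 2) → ZMod 2) →+* (↥(circCode n 2) → ZMod 2) :=
  Pi.ringHom (fun c => (Pi.evalRingHom (fun _ => ZMod 2) (ee h3 (f ((ee h3).symm c)))))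

lemma Phi_apply (h3 : 3 ≤ n) (f : Fin n → Fin n) (g : ↥(circCode n 2) → ZMod 2)
    (c : ↥(circCode n 2)) : Phi h3 f g c = g (ee h3 (f ((ee h3).symm c))) := rfl

lemma Phi_inj (h3 : 3 ≤ n) : Function.Injective (Phi (n := n) h3) := by
  intro f f' hff
  funext i
  have h1 := congrFun (congrArg (fun φ => φ (fun c => if c = ee h3 (f i) then (1 : ZMod 2) else 0)) hff) (ee h3 i)
  simp only [Phi_apply, Equiv.symm_apply_apply] at h1
  rw [if_pos trivial] at h1
  by_cases h : ee h3 (f' i) = ee h3 (f i)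
  · exact ((ee h3).injective h).symm
  · rw [if_neg h] at h1; exact absurd h1 one_ne_zero

lemma neural_iff (h3 : 3 ≤ n) (f : Fin n → Fin n) :
    IsNeuralEndo (circCode n 2) (Phi h3 f) ↔ Hcond f := by
  have he : ∀ u v : ↥(circCode n 2) → ZMod 2, u = v ↔ ∀ i, u (ee h3 i) = v (ee h3 i) := by
    intro u v
    constructor
    · intro h i; rw [h]
    · intro h; funext c
      obtain ⟨i, rfl⟩ := (ee h3).surjective c; exact h i
  have key : ∀ j i, Phi h3 f (xvar (circCode n 2) j) (ee h3 i)
      = if Am j (f i) then 1 else 0 := by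
    intro j i
    rw [Phi_apply, Equiv.symm_apply_apply, xvar_e h3]
  unfold IsNeuralEndo Hcond
  apply forall_congr'
  intro j
  apply or_congr
  · rw [he]
    apply forall_congr'; intro i
    rw [key]
    by_cases h : Am j (f i)
    · simp [h]
    · simp [h]
  apply or_congr
  · rw [he]
    apply forall_congr'; intro i
    rw [key]
    by_cases h : Am j (f i)
    · simp [h]
    · simp [h]
  · apply exists_congr; intro k
    rw [he]
    apply forall_congr'; intro i
    rw [key, xvar_e h3]
    by_cases h : Am j (f i) <;> by_cases h' : Am k i <;> simp [h, h']

lemma Phi_surj (h3 : 3 ≤ n) (φ : (↥(circCode n 2) → ZMod 2) →+* (↥(circCode n 2) → ZMod 2)) :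
    ∃ f : Fin n → Fin n, φ = Phi h3 f := by
  classical
  -- delta functions
  have hsum : (∑ i : Fin n, (fun c => if c = ee h3 i then (1 : ZMod 2) else 0)) = (1 : ↥(circCode n 2) → ZMod 2) := by
    funext c
    obtain ⟨i0, rfl⟩ := (ee h3).surjective c
    have : ∀ i : Fin n, (if ee h3 i0 = ee h3 i then (1:ZMod 2) else 0) = if i = i0 then 1 else 0 := by
      intro i
      by_cases h : i = i0
      · subst h; simp
      · rw [if_neg (fun hh => h ((ee h3).injective hh).symm), if_neg h]
    simp only [Finset.sum_apply]
    calc (∑ i : Fin n, if ee h3 i0 = ee h3 i then (1:ZMod 2) else 0)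
        = ∑ i : Fin n, if i = i0 then (1:ZMod 2) else 0 := Finset.sum_congr rfl (fun i _ => this i)
      _ = 1 := by rw [Finset.sum_ite_eq' Finset.univ i0 (fun _ => (1:ZMod 2))]; simp
  have hpt : ∀ c : ↥(circCode n 2), ∃ p : ↥(circCode n 2), ∀ g : ↥(circCode n 2) → ZMod 2, φ g c = g p := by
    intro c
    set ψ := (Pi.evalRingHom (fun _ : ↥(circCode n 2) => ZMod 2) c).comp φ with hψ
    have hψsum : (∑ i : Fin n, ψ (fun c' => if c' = ee h3 i then (1 : ZMod 2) else 0)) = 1 := by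
      rw [← map_sum, hsum, map_one]
    have hex : ∃ i0 : Fin n, ψ (fun c' => if c' = ee h3 i0 then (1 : ZMod 2) else 0) = 1 := by
      by_contra hno
      push_neg at hno
      have : ∀ i ∈ Finset.univ, ψ (fun c' => if c' = ee h3 i then (1 : ZMod 2) else 0) = 0 := by
        intro i _
        rcases zmod2_cases_s15 (ψ (fun c' => if c' = ee h3 i then (1 : ZMod 2) else 0)) with h | h
        · exact h
        · exact absurd h (hno i)
      rw [Finset.sum_congr rfl this] at hψsum
      simp at hψsum
    obtain ⟨i0, hi0⟩ := hex
    refine ⟨ee h3 i0, fun g => ?_⟩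
    set δ : ↥(circCode n 2) → ZMod 2 := fun c' => if c' = ee h3 i0 then (1 : ZMod 2) else 0 with hδ
    have hmul : g * δ = (fun _ => g (ee h3 i0)) * δ := by
      funext c'
      by_cases h : c' = ee h3 i0
      · subst h; simp [hδ]
      · simp [hδ, if_neg h]
    have hconst : ψ (fun _ => g (ee h3 i0)) = g (ee h3 i0) := by
      rcases zmod2_cases_s15 (g (ee h3 i0)) with h | h <;> rw [h]
      · exact map_zero ψ
      · exact map_one ψ
    have : ψ g = ψ g * ψ δ := by rw [hi0, mul_one]
    rw [← map_mul, hmul, map_mul, hconst, hi0, mul_one] at this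
    exact this
  choose pt hpt using hpt
  refine ⟨fun i => (ee h3).symm (pt (ee h3 i)), ?_⟩
  apply RingHom.ext
  intro g
  funext c
  obtain ⟨i, rfl⟩ := (ee h3).surjective c
  rw [Phi_apply, Equiv.symm_apply_apply, Equiv.apply_symm_apply, hpt]

lemma Hcond_const (a : Fin n) : Hcond (fun _ => a) := by
  intro j
  by_cases h : Am j a
  · right; left; intro _; exact h
  · left; intro _; exact h

lemma Hcond_shift (a : Fin n) : Hcond (fun i => i + a) := by
  intro j
  right; right
  refine ⟨j - a, fun i => ?_⟩
  unfold Am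
  constructor
  · rintro (h | h)
    · left; linear_combination h
    · right; linear_combination h
  · rintro (h | h)
    · left; linear_combination h
    · right; linear_combination h

lemma Hcond_refl (a : Fin n) : Hcond (fun i => a - i) := by
  intro j
  right; right
  refine ⟨a - j + 1, fun i => ?_⟩
  unfold Am
  constructor
  · rintro (h | h)
    · right; linear_combination -h
    · left; linear_combination -h
  · rintro (h | h)
    · right; linear_combination -h
    · left; linear_combination -h

lemma fam_inj (h3 : 3 ≤ n) : Function.Injective (fam (n := n)) := by
  have h10 : (1 : Fin n) ≠ 0 := one_ne_zero' h3
  have h20 : (1 : Fin n) + 1 ≠ 0 := two_ne_zero' h3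
  rintro ⟨k, a⟩ ⟨k', a'⟩ hh
  have h0 := congrFun hh 0
  have h1 := congrFun hh 1
  fin_cases k <;> fin_cases k' <;> simp only [fam] at h0 h1 ⊢
  · have : a = a' := by linear_combination h0
    subst this; rfl
  · exact absurd (by linear_combination h0 - h1 : (1:Fin n) = 0) h10
  · exact absurd (by linear_combination h1 - h0 : (1:Fin n) = 0) h10
  · exact absurd (by linear_combination h1 - h0 : (1:Fin n) = 0) h10
  · have : a = a' := by linear_combination h0
    subst this; rfl
  · exact absurd (by linear_combination h1 - h0 : (1:Fin n) + 1 = 0) h20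
  · exact absurd (by linear_combination h0 - h1 : (1:Fin n) = 0) h10
  · exact absurd (by linear_combination h0 - h1 : (1:Fin n) + 1 = 0) h20
  · have : a = a' := by linear_combination h0
    subst this; rfl

lemma hard_ge4 (h4 : 4 ≤ n) (hodd : Odd n) (f : Fin n → Fin n) (H : Hcond f) :
    ∃ p, f = fam p := by
  have h3 : 3 ≤ n := by omega
  have h10 := one_ne_zero' (n := n) h3
  have h20 := two_ne_zero' (n := n) h3
  have h30 := three_ne_zero' (n := n) h4
  by_cases hall : ∃ j0 : Fin n, ∀ i, Am j0 (f i)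
  · -- constant case
    obtain ⟨j0, hj0⟩ := hall
    rcases H (j0 - 1) with hno | hal | ⟨k, hk⟩
    · -- f is constant j0
      refine ⟨(0, j0), funext fun i => ?_⟩
      show f i = j0
      rcases hj0 i with h | h
      · exact h
      · exact absurd (Or.inl h) (hno i)
    · -- f is constant j0 - 1
      refine ⟨(0, j0 - 1), funext fun i => ?_⟩
      show f i = j0 - 1
      rcases hj0 i with h | h
      · rcases hal i with h' | h'
        · exact absurd (by linear_combination h' - h : (1:Fin n) = 0) h10
        · exact absurd (by linear_combination h' - h : (1:Fin n) + 1 = 0) h20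
      · exact h
    · -- pair case: contradiction with parity
      exfalso
      have hk' : ∀ i, f i = j0 - 1 ↔ Am k i := by
        intro i
        rw [← hk i]
        constructor
        · intro h; exact Or.inl h
        · rintro (h | h)
          · exact h
          · exfalso
            rcases hj0 i with h' | h'
            · exact h20 (by linear_combination h - h')
            · exact h10 (by linear_combination h - h')
      rcases H (j0 + 1) with hno | hal | ⟨k', hk''⟩
      · -- none: all f i = j0 - 1 so Am k i for all i; contradiction at i = k + 1
        have hfa : ∀ i, f i = j0 - 1 := by
          intro i
          rcases hj0 i with h | h
          · exact absurd (Or.inr (by linear_combination h)) (hno i)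
          · exact h
        have := (hk' (k + 1)).mp (hfa (k + 1))
        rcases this with h | h
        · exact h10 (by linear_combination h)
        · exact h20 (by linear_combination h)
      · -- all: f k = j0 and f k = j0 - 1
        have h1 : f k = j0 - 1 := (hk' k).mpr (Or.inl rfl)
        rcases hal k with h | h
        · exact h20 (by linear_combination h1 - h)
        · exact h10 (by linear_combination h1 - h)
      · -- pair & pair: n = 4
        have hk2 : ∀ i, f i = j0 ↔ Am k' i := by
          intro i
          rw [← hk'' i]
          constructor
          · intro h; exact Or.inr (by linear_combination h)
          · rintro (h | h)
            · exfalso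
              rcases hj0 i with h' | h'
              · exact h10 (by linear_combination h' - h)
              · exact h20 (by linear_combination h' - h)
            · linear_combination h
        have hne : ∀ a : Fin n, a ≠ a - 1 := fun a hh => h10 (by linear_combination hh)
        have hcard : (Finset.univ : Finset (Fin n)).card = ({k, k-1} ∪ {k', k'-1} : Finset (Fin n)).card := by
          congr 1
          apply (Finset.eq_univ_iff_forall.mpr ?_).symm
          intro i
          rw [Finset.mem_union, Finset.mem_insert, Finset.mem_singleton,
            Finset.mem_insert, Finset.mem_singleton]
          rcases hj0 i with h | h
          · right; exact (hk2 i).mp h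
          · left; exact (hk' i).mp h
        have hdisj : Disjoint ({k, k-1} : Finset (Fin n)) {k', k'-1} := by
          rw [Finset.disjoint_left]
          intro i hi hi'
          rw [Finset.mem_insert, Finset.mem_singleton] at hi hi'
          have h1 : f i = j0 - 1 := (hk' i).mpr hi
          have h2 : f i = j0 := (hk2 i).mpr hi'
          exact h10 (by linear_combination h1 - h2)
        rw [Finset.card_union_of_disjoint hdisj, Finset.card_pair (hne k),
          Finset.card_pair (hne k'), Finset.card_univ, Fintype.card_fin] at hcard
        rw [hcard] at hodd
        exact (Nat.not_odd_iff_even.mpr (by decide)) hodd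
  · -- main case
    push_neg at hall
    -- double counting: every row has exactly a pair
    have hsum : ∑ j : Fin n, (Finset.univ.filter (fun i => Am j (f i))).card = 2 * n := by
      have inner : ∀ i : Fin n, (Finset.univ.filter (fun j => Am j (f i))).card = 2 := by
        intro i
        have hfe : Finset.univ.filter (fun j => Am j (f i)) = {f i, f i + 1} := by
          ext j
          simp only [Finset.mem_filter, Finset.mem_univ, true_and, Finset.mem_insert,
            Finset.mem_singleton, Am]
          constructor
          · rintro (h | h)
            · left; exact h.symm
            · right; linear_combination -h
          · rintro (h | h)
            · left; exact h.symm
            · right; linear_combination -h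
        rw [hfe, Finset.card_pair (fun hh => h10 (by linear_combination -hh))]
      calc ∑ j : Fin n, (Finset.univ.filter (fun i => Am j (f i))).card
          = ∑ j : Fin n, ∑ i : Fin n, (if Am j (f i) then 1 else 0) := by
            refine Finset.sum_congr rfl fun j _ => ?_
            rw [Finset.card_filter]
        _ = ∑ i : Fin n, ∑ j : Fin n, (if Am j (f i) then 1 else 0) := Finset.sum_comm
        _ = ∑ i : Fin n, (Finset.univ.filter (fun j => Am j (f i))).card := by
            refine Finset.sum_congr rfl fun i _ => ?_
            rw [Finset.card_filter]
        _ = 2 * n := by simp [inner]; ring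
    have hcard2 : ∀ j k : Fin n, (∀ i, Am j (f i) ↔ Am k i) →
        (Finset.univ.filter (fun i => Am j (f i))).card = 2 := by
      intro j k hk
      have hfe : Finset.univ.filter (fun i => Am j (f i)) = {k, k - 1} := by
        ext i
        simp only [Finset.mem_filter, Finset.mem_univ, true_and, Finset.mem_insert,
          Finset.mem_singleton]
        exact hk i
      rw [hfe, Finset.card_pair (fun hh => h10 (by linear_combination hh))]
    have hnone_false : ∀ j0 : Fin n, ¬ (∀ i, ¬ Am j0 (f i)) := by
      intro j0 hj0
      have hle : ∀ j : Fin n, (Finset.univ.filter (fun i => Am j (f i))).card ≤ 2 := by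
        intro j
        rcases H j with h | h | ⟨k, hk⟩
        · rw [Finset.filter_eq_empty_iff.mpr (fun i _ => h i)]; simp
        · obtain ⟨i, hi⟩ := hall j; exact absurd (h i) (not_or.mpr hi)
        · rw [hcard2 j k hk]
      have hlt : (Finset.univ.filter (fun i => Am j0 (f i))).card < 2 := by
        rw [Finset.filter_eq_empty_iff.mpr (fun i _ => hj0 i)]; simp
      have hcontra := Finset.sum_lt_sum (s := Finset.univ)
        (f := fun j : Fin n => (Finset.univ.filter (fun i => Am j (f i))).card)
        (g := fun _ => 2) (fun j _ => hle j) ⟨j0, Finset.mem_univ j0, hlt⟩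
      rw [hsum] at hcontra
      simp [Finset.sum_const, Finset.card_univ, mul_comm] at hcontra
    have hpair : ∀ j : Fin n, ∃ k, ∀ i, Am j (f i) ↔ Am k i := by
      intro j
      rcases H j with h | h | hk
      · exact absurd h (hnone_false j)
      · obtain ⟨i, hi⟩ := hall j; exact absurd (h i) (not_or.mpr hi)
      · exact hk
    choose g hg using hpair
    clear hsum hcard2 hnone_false hall H
    -- emptiness propagation
    have hstep : ∀ m : Fin n, (∀ i, f i ≠ m) → (∀ i, f i ≠ m + 1 + 1) := by
      intro m hm
      have hA1 : f (g (m+1)) = m + 1 := by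
        rcases (hg (m+1) (g (m+1))).mpr (Or.inl rfl) with h | h
        · exact h
        · exact absurd (by linear_combination h : f (g (m+1)) = m) (hm _)
      have hA2 : f (g (m+1) - 1) = m + 1 := by
        rcases (hg (m+1) (g (m+1) - 1)).mpr (Or.inr rfl) with h | h
        · exact h
        · exact absurd (by linear_combination h : f (g (m+1) - 1) = m) (hm _)
      intro i hfi
      have h1 : i = g (m+1+1) ∨ i = g (m+1+1) - 1 := (hg (m+1+1) i).mp (Or.inl hfi)
      have h2 : g (m+1) = g (m+1+1) ∨ g (m+1) = g (m+1+1) - 1 :=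
        (hg (m+1+1) (g (m+1))).mp (Or.inr (by linear_combination hA1))
      have h3 : g (m+1) - 1 = g (m+1+1) ∨ g (m+1) - 1 = g (m+1+1) - 1 :=
        (hg (m+1+1) (g (m+1) - 1)).mp (Or.inr (by linear_combination hA2))
      have hi1 : i ≠ g (m+1) := by
        intro hh; rw [hh] at hfi
        exact h10 (by linear_combination hA1 - hfi)
      have hi2 : i ≠ g (m+1) - 1 := by
        intro hh; rw [hh] at hfi
        exact h10 (by linear_combination hA2 - hfi)
      rcases h2 with h2 | h2
      · rcases h1 with h1 | h1
        · exact hi1 (by linear_combination h1 - h2)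
        · rcases h3 with h3 | h3
          · exact h10 (by linear_combination h2 - h3)
          · exact hi2 (by linear_combination h1 - h3)
      · rcases h3 with h3 | h3
        · exact h20 (by linear_combination h2 - h3)
        · exact h10 (by linear_combination h2 - h3)
    have hemp : ∀ m : Fin n, (∀ i, f i ≠ m) → False := by
      intro m hm
      have hiter : ∀ k : ℕ, ∀ i, f i ≠ m + ((2*k : ℕ) : Fin n) := by
        intro k
        induction k with
        | zero => simpa using hm
        | succ k ih =>
          intro i hi
          apply hstep _ ih i
          rw [hi]
          push_cast
          ring
      obtain ⟨t, ht⟩ := hodd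
      apply hiter ((f 0 - m).val * (t + 1)) 0
      have hcast : ((2 * ((f 0 - m).val * (t+1)) : ℕ) : Fin n) = f 0 - m := by
        have h2t : (2 * ((f 0 - m).val * (t+1)) : ℕ) = (f 0 - m).val * (n + 1) := by
          subst ht; ring
        rw [h2t, Nat.cast_mul, Nat.cast_add, Nat.cast_one, Fin.natCast_self,
          Fin.cast_val_eq_self]
        ring
      rw [hcast]
      ring
    -- trichotomy
    have hUD : ∀ j : Fin n, g (j+1) = g j + 1 ∨ g (j+1) = g j - 1 := by
      intro j
      have hgeq : g (j+1) = g j → False := by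
        intro hq
        apply hemp (j - 1)
        intro i hfi
        have h1 : i = g j ∨ i = g j - 1 := (hg j i).mp (Or.inr hfi)
        have h2 : f i = j + 1 ∨ f i = j := by
          rcases (hg (j+1) i).mpr (by rw [hq]; exact h1) with h | h
          · exact Or.inl h
          · exact Or.inr (by linear_combination h)
        rcases h2 with h | h
        · exact h20 (by linear_combination hfi - h)
        · exact h10 (by linear_combination hfi - h)
      rcases (hg (j+1) (g (j+1))).mpr (Or.inl rfl) with ha | ha
      · rcases (hg (j+1) (g (j+1) - 1)).mpr (Or.inr rfl) with hb | hb
        · -- both map to j+1 : empty fiber at j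
          exfalso
          apply hemp j
          intro i hfi
          have h1 : i = g (j+1) ∨ i = g (j+1) - 1 :=
            (hg (j+1) i).mp (Or.inr (by linear_combination hfi))
          rcases h1 with h1 | h1 <;> rw [h1] at hfi
          · exact h10 (by linear_combination hfi - ha)
          · exact h10 (by linear_combination hfi - hb)
        · -- f (g (j+1) - 1) = j
          have h1 : g (j+1) - 1 = g j ∨ g (j+1) - 1 = g j - 1 :=
            (hg j _).mp (Or.inl (by linear_combination hb))
          rcases h1 with h1 | h1
          · left; linear_combination h1
          · exact absurd (by linear_combination h1 : g (j+1) = g j) (fun hq => hgeq hq)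
      · -- f (g (j+1)) = j
        have h1 : g (j+1) = g j ∨ g (j+1) = g j - 1 :=
          (hg j _).mp (Or.inl (by linear_combination ha))
        rcases h1 with h1 | h1
        · exact absurd h1 hgeq
        · right; exact h1
    -- value along the climb
    have hfup : ∀ j : Fin n, g (j+1) = g j + 1 → f (g j + 1) = j + 1 := by
      intro j h
      rcases (hg (j+1) (g (j+1))).mpr (Or.inl rfl) with ha | ha
      · rw [h] at ha; exact ha
      · exfalso
        have h1 : g (j+1) = g j ∨ g (j+1) = g j - 1 :=
          (hg j _).mp (Or.inl (by linear_combination ha))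
        rcases h1 with h1 | h1
        · exact h10 (by linear_combination h1 - h)
        · exact h20 (by linear_combination h1 - h)
    have hfdn : ∀ j : Fin n, g (j+1) = g j - 1 → f (g (j+1) - 1) = j + 1 := by
      intro j h
      rcases (hg (j+1) (g (j+1) - 1)).mpr (Or.inr rfl) with hb | hb
      · exact hb
      · exfalso
        have h1 : g (j+1) - 1 = g j ∨ g (j+1) - 1 = g j - 1 :=
          (hg j _).mp (Or.inl (by linear_combination hb))
        rcases h1 with h1 | h1
        · exact h20 (by linear_combination h - h1)
        · exact h10 (by linear_combination h - h1)
    have hcross : ∀ j : Fin n, g (j+1+1) = g j → False := by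
      intro j hgj
      have hf1 : f (g (j+1+1)) = j+1+1 ∨ f (g (j+1+1)) = j+1 := by
        rcases (hg (j+1+1) _).mpr (Or.inl rfl) with h' | h'
        · exact Or.inl h'
        · exact Or.inr (by linear_combination h')
      have hf2 : f (g j) = j ∨ f (g j) = j - 1 := by
        rcases (hg j (g j)).mpr (Or.inl rfl) with h' | h'
        · exact Or.inl h'
        · exact Or.inr h'
      rw [hgj] at hf1
      rcases hf1 with h' | h' <;> rcases hf2 with h'' | h''
      · exact h20 (by linear_combination h'' - h')
      · exact h30 (by linear_combination h'' - h')
      · exact h10 (by linear_combination h'' - h')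
      · exact h20 (by linear_combination h'' - h')
    have hup : ∀ j : Fin n, g (j+1) = g j + 1 → g (j+1+1) = g (j+1) + 1 := by
      intro j h
      rcases hUD (j+1) with h2 | h2
      · exact h2
      · exact absurd (by linear_combination h2 + h : g (j+1+1) = g j) (fun hh => hcross j hh)
    have hdn : ∀ j : Fin n, g (j+1) = g j - 1 → g (j+1+1) = g (j+1) - 1 := by
      intro j h
      rcases hUD (j+1) with h2 | h2
      · exact absurd (by linear_combination h2 + h : g (j+1+1) = g j) (fun hh => hcross j hh)
      · exact h2
    rcases hUD 0 with h0 | h0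
    · -- shift case
      have hUall : ∀ k : ℕ, g (((k : ℕ) : Fin n) + 1) = g ((k : ℕ) : Fin n) + 1 := by
        intro k
        induction k with
        | zero => simpa using h0
        | succ k ih =>
          have hc : (((k+1 : ℕ)) : Fin n) = ((k : ℕ) : Fin n) + 1 := by push_cast; ring
          rw [hc]
          exact hup _ ih
      have hUall' : ∀ j : Fin n, g (j + 1) = g j + 1 := by
        intro j
        have := hUall j.val
        rwa [Fin.cast_val_eq_self] at this
      have hgv : ∀ k : ℕ, g ((k : ℕ) : Fin n) = g 0 + ((k : ℕ) : Fin n) := by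
        intro k
        induction k with
        | zero => simp
        | succ k ih =>
          have hc : (((k+1 : ℕ)) : Fin n) = ((k : ℕ) : Fin n) + 1 := by push_cast; ring
          rw [hc, hUall' _, ih]
          ring
      have hg0 : ∀ j : Fin n, g j = g 0 + j := by
        intro j
        have := hgv j.val
        rwa [Fin.cast_val_eq_self] at this
      refine ⟨(1, -(g 0)), funext fun i => ?_⟩
      show f i = i + -(g 0)
      have h2 : g (i - g 0 - 1) + 1 = i := by rw [hg0]; ring
      have h3 := hfup (i - g 0 - 1) (hUall' _)
      rw [h2] at h3
      linear_combination h3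
    · -- reflection case
      have hDall : ∀ k : ℕ, g (((k : ℕ) : Fin n) + 1) = g ((k : ℕ) : Fin n) - 1 := by
        intro k
        induction k with
        | zero => simpa using h0
        | succ k ih =>
          have hc : (((k+1 : ℕ)) : Fin n) = ((k : ℕ) : Fin n) + 1 := by push_cast; ring
          rw [hc]
          exact hdn _ ih
      have hDall' : ∀ j : Fin n, g (j + 1) = g j - 1 := by
        intro j
        have := hDall j.val
        rwa [Fin.cast_val_eq_self] at this
      have hgv : ∀ k : ℕ, g ((k : ℕ) : Fin n) = g 0 - ((k : ℕ) : Fin n) := by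
        intro k
        induction k with
        | zero => simp
        | succ k ih =>
          have hc : (((k+1 : ℕ)) : Fin n) = ((k : ℕ) : Fin n) + 1 := by push_cast; ring
          rw [hc, hDall' _, ih]
          ring
      have hg0 : ∀ j : Fin n, g j = g 0 - j := by
        intro j
        have := hgv j.val
        rwa [Fin.cast_val_eq_self] at this
      refine ⟨(2, g 0 - 1), funext fun i => ?_⟩
      show f i = (g 0 - 1) - i
      have h2 : g ((g 0 - i - 1 - 1) + 1) - 1 = i := by rw [hg0]; ring
      have h3 := hfdn (g 0 - i - 1 - 1) (hDall' _)
      rw [h2] at h3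
      linear_combination h3

set_option maxRecDepth 100000 in
lemma hard3 : ∀ f : Fin 3 → Fin 3, Hcond f → ∃ p, f = fam p := by decide

lemma hard (h3 : 3 ≤ n) (hodd : Odd n) (f : Fin n → Fin n) (H : Hcond f) :
    ∃ p, f = fam p := by
  rcases Nat.lt_or_ge n 4 with h4 | h4
  · have hn : n = 3 := by omega
    subst hn
    exact hard3 f H
  · exact hard_ge4 h4 hodd f H

end basic

end NeuralAux

open NeuralAux in
/-- For the circulant code with support `p = 2` on an odd number `n > 1` of neurons,
the number of neural ring endomorphisms is `3n`. -/
theorem count_neuralEndo_support_two_odd (n : ℕ) (hn : 1 < n) (hodd : Odd n) :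
    {φ : (↥(circCode n 2) → ZMod 2) →+* (↥(circCode n 2) → ZMod 2) |
      IsNeuralEndo (circCode n 2) φ}.ncard = 3 * n := by
  haveI : NeZero n := ⟨by omega⟩
  have h3 : 3 ≤ n := by
    obtain ⟨t, ht⟩ := hodd; omega
  set q : Fin 3 × Fin n → ((↥(circCode n 2) → ZMod 2) →+* (↥(circCode n 2) → ZMod 2)) :=
    fun p => Phi h3 (fam p) with hq
  have hqinj : Function.Injective q := fun p p' h => fam_inj h3 (Phi_inj h3 h)
  have hset : {φ : (↥(circCode n 2) → ZMod 2) →+* (↥(circCode n 2) → ZMod 2) |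
      IsNeuralEndo (circCode n 2) φ} = Set.range q := by
    ext φ
    simp only [Set.mem_setOf_eq, Set.mem_range]
    constructor
    · intro hφ
      obtain ⟨f, rfl⟩ := Phi_surj h3 φ
      have hc : Hcond f := (neural_iff h3 f).mp hφ
      obtain ⟨p, rfl⟩ := hard h3 hodd f hc
      exact ⟨p, rfl⟩
    · rintro ⟨p, rfl⟩
      apply (neural_iff h3 _).mpr
      rcases p with ⟨k, a⟩
      fin_cases k
      · exact Hcond_const a
      · exact Hcond_shift a
      · exact Hcond_refl a
  rw [hset]
  have hcount : (Set.range q).ncard = Nat.card (Fin 3 × Fin n) := by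
    rw [← Nat.card_coe_set_eq]
    exact Nat.card_range_of_injective hqinj
  rw [hcount, Nat.card_eq_fintype_card, Fintype.card_prod, Fintype.card_fin, Fintype.card_fin]
end
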